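/- arXiv:1002.2479 — 8 statements merged into one kernel-verified Lean document; each statement's English description precedes it below -/
import Mathlib

section
/- Let T = R_U T_{(τ,t)} and S = R_V T_{(σ,s)} with U, V ∈ U(n−1), τ, σ ∈ ℂ^{n−1}, t, s ∈ ℝ. Then ST = TS if and only if UV = VU and (Vᴴτ, t)·(σ, s) = (Uᴴσ, s)·(τ, t) in the Heisenberg group; explicitly, if and only if UV = VU, Vᴴτ + σ = Uᴴσ + τ, and Im(σᴴVᴴτ) = Im(τᴴUᴴσ). -/
open Matrix Complex

/-- Index type for block matrices with blocks of sizes `1, m, 1` (so `m = n - 1`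
and the total size is `n + 1`). -/
abbrev Idx (m : ℕ) : Type := Unit ⊕ (Fin m ⊕ Unit)

/-- The Heisenberg rotation `R_U = diag(1, U, 1)`. -/
noncomputable def RU {m : ℕ} (U : Matrix (Fin m) (Fin m) ℂ) : Matrix (Idx m) (Idx m) ℂ :=
  Matrix.of fun i j =>
    match i, j with
    | Sum.inl _, Sum.inl _ => 1
    | Sum.inr (Sum.inl k), Sum.inr (Sum.inl l) => U k l
    | Sum.inr (Sum.inr _), Sum.inr (Sum.inr _) => 1
    | _, _ => 0

/-- The Heisenberg translation
`T_{(τ,t)} = [[1, −τᴴ, (−|τ|²+it)/2], [0, I, τ], [0, 0, 1]]`. -/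
noncomputable def Htr {m : ℕ} (τ : Fin m → ℂ) (t : ℝ) : Matrix (Idx m) (Idx m) ℂ :=
  Matrix.of fun i j =>
    match i, j with
    | Sum.inl _, Sum.inl _ => 1
    | Sum.inl _, Sum.inr (Sum.inl l) => -((starRingEnd ℂ) (τ l))
    | Sum.inl _, Sum.inr (Sum.inr _) =>
        (-(((∑ k, Complex.normSq (τ k) : ℝ)) : ℂ) + (t : ℂ) * Complex.I) / 2
    | Sum.inr (Sum.inl k), Sum.inr (Sum.inl l) => if k = l then 1 else 0
    | Sum.inr (Sum.inl k), Sum.inr (Sum.inr _) => τ k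
    | Sum.inr (Sum.inr _), Sum.inr (Sum.inr _) => 1
    | _, _ => 0

/-- The Heisenberg dilation `D_r = diag(r, I, 1/r)`. -/
noncomputable def Dil {m : ℕ} (r : ℝ) : Matrix (Idx m) (Idx m) ℂ :=
  Matrix.of fun i j =>
    match i, j with
    | Sum.inl _, Sum.inl _ => (r : ℂ)
    | Sum.inr (Sum.inl k), Sum.inr (Sum.inl l) => if k = l then 1 else 0
    | Sum.inr (Sum.inr _), Sum.inr (Sum.inr _) => ((r : ℂ))⁻¹
    | _, _ => 0

/-- The block diagonal matrix `diag(μ, A, λ)`. -/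
noncomputable def diagM {m : ℕ} (μ : ℂ) (A : Matrix (Fin m) (Fin m) ℂ) (lam : ℂ) :
    Matrix (Idx m) (Idx m) ℂ :=
  Matrix.of fun i j =>
    match i, j with
    | Sum.inl _, Sum.inl _ => μ
    | Sum.inr (Sum.inl k), Sum.inr (Sum.inl l) => A k l
    | Sum.inr (Sum.inr _), Sum.inr (Sum.inr _) => lam
    | _, _ => 0

/-- The matrix `J = [[0,0,1],[0,I,0],[1,0,0]]` of the second Hermitian form. -/
noncomputable def Jm (m : ℕ) : Matrix (Idx m) (Idx m) ℂ :=
  Matrix.of fun i j =>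
    match i, j with
    | Sum.inl _, Sum.inr (Sum.inr _) => 1
    | Sum.inr (Sum.inr _), Sum.inl _ => 1
    | Sum.inr (Sum.inl k), Sum.inr (Sum.inl l) => if k = l then 1 else 0
    | _, _ => 0

/-- The second Hermitian form `⟨z,w⟩ = wᴴ J z` of signature `(n,1)`. -/
noncomputable def hermJ {m : ℕ} (z w : Idx m → ℂ) : ℂ :=
  dotProduct (star w) ((Jm m).mulVec z)

/-- Membership in `U(n,1)` for the second Hermitian form: `g ∈ GL` and `gᴴ J g = J`. -/
def InU2 {m : ℕ} (g : Matrix (Idx m) (Idx m) ℂ) : Prop :=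
  IsUnit g ∧ gᴴ * Jm m * g = Jm m

/-- The vector `e₁ = (1,0,…,0)ᵗ` (representing the boundary point `∞`). -/
noncomputable def e1 (m : ℕ) : Idx m → ℂ := fun i =>
  match i with
  | Sum.inl _ => 1
  | _ => 0

/-- The vector `e_{n+1} = (0,…,0,1)ᵗ` (representing the boundary point `o`). -/
noncomputable def elast (m : ℕ) : Idx m → ℂ := fun i =>
  match i with
  | Sum.inr (Sum.inr _) => 1
  | _ => 0

/-- `dotc x y = xᴴ y = ∑ conj(xₖ) yₖ`. -/
noncomputable def dotc {m : ℕ} (x y : Fin m → ℂ) : ℂ :=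
  ∑ k, (starRingEnd ℂ) (x k) * y k

/-- A matrix is diagonalizable if it is conjugate (in `GL`) to a diagonal matrix. -/
def IsDiagonalizable {N : Type*} [Fintype N] [DecidableEq N] (A : Matrix N N ℂ) : Prop :=
  ∃ P : Matrix N N ℂ, IsUnit P.det ∧ (P⁻¹ * A * P).IsDiag

noncomputable def cH {m : ℕ} (τ : Fin m → ℂ) (t : ℝ) : ℂ :=
  (-(((∑ k, Complex.normSq (τ k) : ℝ)) : ℂ) + (t : ℂ) * Complex.I) / 2

noncomputable def Mmat {m : ℕ} (U : Matrix (Fin m) (Fin m) ℂ) (τ : Fin m → ℂ) (t : ℝ) :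
    Matrix (Idx m) (Idx m) ℂ :=
  Matrix.of fun i j =>
    match i, j with
    | Sum.inl _, Sum.inl _ => 1
    | Sum.inl _, Sum.inr (Sum.inl l) => -((starRingEnd ℂ) (τ l))
    | Sum.inl _, Sum.inr (Sum.inr _) => cH τ t
    | Sum.inr (Sum.inl k), Sum.inr (Sum.inl l) => U k l
    | Sum.inr (Sum.inl k), Sum.inr (Sum.inr _) => U.mulVec τ k
    | Sum.inr (Sum.inr _), Sum.inr (Sum.inr _) => 1
    | _, _ => 0

lemma RU_mul_Htr {m : ℕ} (U : Matrix (Fin m) (Fin m) ℂ) (τ : Fin m → ℂ) (t : ℝ) :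
    RU U * Htr τ t = Mmat U τ t := by
  ext i j
  rcases i with _ | (i | _) <;> rcases j with _ | (j | _) <;>
      simp [RU, Htr, Mmat, cH, Matrix.mul_apply, Fintype.sum_sum_type, Matrix.mulVec,
        dotProduct, mul_comm]

noncomputable def M2 {m : ℕ} (V : Matrix (Fin m) (Fin m) ℂ) (σ : Fin m → ℂ) (s : ℝ)
    (U : Matrix (Fin m) (Fin m) ℂ) (τ : Fin m → ℂ) (t : ℝ) : Matrix (Idx m) (Idx m) ℂ :=
  Matrix.of fun i j =>
    match i, j with
    | Sum.inl _, Sum.inl _ => 1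
    | Sum.inl _, Sum.inr (Sum.inl l) =>
        -((starRingEnd ℂ) (τ l)) - (starRingEnd ℂ) (Uᴴ.mulVec σ l)
    | Sum.inl _, Sum.inr (Sum.inr _) => cH τ t + cH σ s - dotc σ (U.mulVec τ)
    | Sum.inr (Sum.inl k), Sum.inr (Sum.inl l) => (V * U) k l
    | Sum.inr (Sum.inl k), Sum.inr (Sum.inr _) => V.mulVec (U.mulVec τ) k + V.mulVec σ k
    | Sum.inr (Sum.inr _), Sum.inr (Sum.inr _) => 1
    | _, _ => 0

lemma Mmat_mul {m : ℕ} (V : Matrix (Fin m) (Fin m) ℂ) (σ : Fin m → ℂ) (s : ℝ)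
    (U : Matrix (Fin m) (Fin m) ℂ) (τ : Fin m → ℂ) (t : ℝ) :
    Mmat V σ s * Mmat U τ t = M2 V σ s U τ t := by
  ext i j
  rcases i with _ | (i | _) <;> rcases j with _ | (j | _) <;>
      simp [Mmat, M2, dotc, Matrix.mul_apply, Fintype.sum_sum_type, Matrix.mulVec,
        dotProduct, Matrix.conjTranspose_apply, map_sum, Finset.sum_sub_distrib,
        Finset.sum_add_distrib, mul_comm, sub_eq_add_neg, Finset.sum_neg_distrib] <;>
      ring_nf

lemma conj_dotc {m : ℕ} (x y : Fin m → ℂ) :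
    (starRingEnd ℂ) (dotc x y) = dotc y x := by
  simp [dotc, map_sum, mul_comm]

lemma dotc_conjT_left {m : ℕ} (A : Matrix (Fin m) (Fin m) ℂ) (x y : Fin m → ℂ) :
    dotc (Aᴴ.mulVec x) y = dotc x (A.mulVec y) := by
  simp only [dotc, Matrix.mulVec, dotProduct, Matrix.conjTranspose_apply, map_sum,
    Complex.star_def, _root_.map_mul, Complex.conj_conj, Finset.sum_mul, Finset.mul_sum]
  rw [Finset.sum_comm]
  refine Finset.sum_congr rfl fun k _ => Finset.sum_congr rfl fun l _ => by ring

lemma dotc_conjT_right {m : ℕ} (A : Matrix (Fin m) (Fin m) ℂ) (x y : Fin m → ℂ) :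
    dotc x (Aᴴ.mulVec y) = dotc (A.mulVec x) y := by
  simpa using (dotc_conjT_left Aᴴ x y).symm

lemma dotc_add_left {m : ℕ} (x y z : Fin m → ℂ) :
    dotc (x + y) z = dotc x z + dotc y z := by
  simp [dotc, add_mul, Finset.sum_add_distrib]

lemma dotc_add_right {m : ℕ} (x y z : Fin m → ℂ) :
    dotc x (y + z) = dotc x y + dotc x z := by
  simp [dotc, mul_add, Finset.sum_add_distrib]

theorem heisenberg_isometries_commute_iff {m : ℕ} (hm : 1 ≤ m)
    (U V : Matrix (Fin m) (Fin m) ℂ)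
    (hU : U ∈ Matrix.unitaryGroup (Fin m) ℂ) (hV : V ∈ Matrix.unitaryGroup (Fin m) ℂ)
    (τ σ : Fin m → ℂ) (t s : ℝ) :
    (RU V * Htr σ s) * (RU U * Htr τ t) = (RU U * Htr τ t) * (RU V * Htr σ s) ↔
      (U * V = V * U ∧ Vᴴ.mulVec τ + σ = Uᴴ.mulVec σ + τ ∧
        (dotc σ (Vᴴ.mulVec τ)).im = (dotc τ (Uᴴ.mulVec σ)).im) := by
  have hUU' : U * Uᴴ = 1 := by
    simpa [Matrix.star_eq_conjTranspose] using (Matrix.mem_unitaryGroup_iff.mp hU)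
  have hVV' : V * Vᴴ = 1 := by
    simpa [Matrix.star_eq_conjTranspose] using (Matrix.mem_unitaryGroup_iff.mp hV)
  rw [RU_mul_Htr, RU_mul_Htr, Mmat_mul, Mmat_mul]
  have hz1 : dotc σ (Vᴴ.mulVec τ) = (starRingEnd ℂ) (dotc τ (V.mulVec σ)) := by
    rw [dotc_conjT_right, ← conj_dotc]
  have hz2 : dotc τ (Uᴴ.mulVec σ) = (starRingEnd ℂ) (dotc σ (U.mulVec τ)) := by
    rw [dotc_conjT_right, ← conj_dotc]
  constructor
  · intro h
    have hC := fun k l => congrFun (congrFun h (Sum.inr (Sum.inl k))) (Sum.inr (Sum.inl l))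
    have hA := fun l => congrFun (congrFun h (Sum.inl ())) (Sum.inr (Sum.inl l))
    have hB := congrFun (congrFun h (Sum.inl ())) (Sum.inr (Sum.inr ()))
    simp only [M2, Matrix.of_apply] at hC hA hB
    have hB' : dotc σ (U.mulVec τ) = dotc τ (V.mulVec σ) := by linear_combination -hB
    refine ⟨by ext k l; exact (hC k l).symm, ?_, ?_⟩
    · funext l
      have h1 := congrArg (starRingEnd ℂ) (hA l)
      simp only [map_sub, map_neg, Complex.conj_conj] at h1
      simp only [Pi.add_apply]
      linear_combination h1
    · rw [hz1, hz2, hB']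
  · rintro ⟨hc, hv, him⟩
    have e1 : dotc (Vᴴ.mulVec τ) (Vᴴ.mulVec τ) = dotc τ τ := by
      rw [dotc_conjT_left, Matrix.mulVec_mulVec, hVV', Matrix.one_mulVec]
    have e2 : dotc (Uᴴ.mulVec σ) (Uᴴ.mulVec σ) = dotc σ σ := by
      rw [dotc_conjT_left, Matrix.mulVec_mulVec, hUU', Matrix.one_mulVec]
    have hnorm : dotc (Vᴴ.mulVec τ + σ) (Vᴴ.mulVec τ + σ)
        = dotc (Uᴴ.mulVec σ + τ) (Uᴴ.mulVec σ + τ) := by rw [hv]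
    simp only [dotc_add_left, dotc_add_right] at hnorm
    have h2 : dotc σ (Vᴴ.mulVec τ) + (starRingEnd ℂ) (dotc σ (Vᴴ.mulVec τ))
        = dotc τ (Uᴴ.mulVec σ) + (starRingEnd ℂ) (dotc τ (Uᴴ.mulVec σ)) := by
      rw [conj_dotc, conj_dotc]
      linear_combination hnorm - e1 + e2
    have hre : (dotc σ (Vᴴ.mulVec τ)).re = (dotc τ (Uᴴ.mulVec σ)).re := by
      have h3 := congrArg Complex.re h2
      simp only [Complex.add_re, Complex.conj_re] at h3
      linarith
    have hz : dotc σ (Vᴴ.mulVec τ) = dotc τ (Uᴴ.mulVec σ) := Complex.ext hre him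
    rw [hz1, hz2] at hz
    have hB' : dotc σ (U.mulVec τ) = dotc τ (V.mulVec σ) :=
      ((starRingEnd ℂ).injective hz).symm
    -- the vector condition transported by V * U
    have hv2 := congrArg (fun x => (V * U).mulVec x) hv
    simp only [Matrix.mulVec_add, Matrix.mulVec_mulVec] at hv2
    have k1 : V * U * Vᴴ = U := by rw [← hc, mul_assoc, hVV', mul_one]
    have k2 : V * U * Uᴴ = V := by rw [mul_assoc, hUU', mul_one]
    rw [k1, k2] at hv2
    ext i j
    rcases i with _ | (i | _) <;> rcases j with _ | (j | _) <;> simp only [M2, Matrix.of_apply]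
    · have hvl := congrFun hv j
      simp only [Pi.add_apply] at hvl
      have h1 := congrArg (starRingEnd ℂ) hvl
      simp only [map_add] at h1
      linear_combination h1
    · linear_combination -hB'
    · rw [hc]
    · have hDk := congrFun hv2 i
      simp only [Pi.add_apply] at hDk
      simp only [Matrix.mulVec_mulVec]
      rw [hc]
      linear_combination -hDk
end

section
/- Let U ∈ U(n−1), τ ∈ ℂ^{n−1}, t ∈ ℝ with Uτ = τ and (τ, t) ≠ (0, 0). Then the matrix T = R_U T_{(τ,t)} has no eigenvector v ∈ ℂ^{n+1} with ⟨v,v⟩ = vᴴJv < 0 (so T has no fixed point in complex hyperbolic space, i.e. T is not elliptic); moreover, T is not diagonalizable. -/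
open Matrix Complex

lemma mulVec_idx {m : ℕ} (M : Matrix (Idx m) (Idx m) ℂ) (v : Idx m → ℂ) (i : Idx m) :
    M.mulVec v i = M i (Sum.inl ()) * v (Sum.inl ())
      + (∑ l, M i (Sum.inr (Sum.inl l)) * v (Sum.inr (Sum.inl l)))
      + M i (Sum.inr (Sum.inr ())) * v (Sum.inr (Sum.inr ())) := by
  simp [Matrix.mulVec, dotProduct, Fintype.sum_sum_type]
  ring

lemma eigen_last_eq_zero {m : ℕ} (U : Matrix (Fin m) (Fin m) ℂ)
    (hU : U ∈ Matrix.unitaryGroup (Fin m) ℂ)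
    (τ : Fin m → ℂ) (t : ℝ) (hτ : U.mulVec τ = τ) (hne : ¬(τ = 0 ∧ t = 0))
    (lam : ℂ) (v : Idx m → ℂ) (hv : (RU U * Htr τ t).mulVec v = lam • v) :
    v (Sum.inr (Sum.inr ())) = 0 := by
  by_contra hc
  rw [← Matrix.mulVec_mulVec] at hv
  set a := v (Sum.inl ()) with ha
  set c := v (Sum.inr (Sum.inr ())) with hcdef
  set w : Fin m → ℂ := fun k => v (Sum.inr (Sum.inl k)) with hw
  have e3 : c = lam * c := by
    have := congrFun hv (Sum.inr (Sum.inr ()))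
    simpa [mulVec_idx, RU, Htr] using this
  have hlam : lam = 1 := by
    have h : (lam - 1) * c = 0 := by linear_combination -e3
    rcases mul_eq_zero.mp h with h | h
    · exact sub_eq_zero.mp h
    · exact absurd h hc
  have e2' : U.mulVec (w + c • τ) = w := by
    funext k
    have := congrFun hv (Sum.inr (Sum.inl k))
    simp [mulVec_idx, RU, Htr, hlam, Matrix.mulVec, dotProduct, mul_add] at this ⊢
    show (∑ x, (U k x * v (Sum.inr (Sum.inl x))
        + U k x * (v (Sum.inr (Sum.inr ())) * τ x))) = v (Sum.inr (Sum.inl k))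
    rw [← this]
    exact Finset.sum_congr rfl fun x _ => by ring
  have hUU : Uᴴ * U = 1 := by have := hU.1; exact this
  have hinner : ∀ x : Fin m → ℂ, star τ ⬝ᵥ U.mulVec x = star τ ⬝ᵥ x := by
    intro x
    have h0 : star (U.mulVec τ) ⬝ᵥ U.mulVec x = star τ ⬝ᵥ x := by
      rw [Matrix.star_mulVec, Matrix.dotProduct_mulVec, Matrix.vecMul_vecMul, hUU,
        Matrix.vecMul_one]
    rw [hτ] at h0
    exact h0
  have hττ : c * (star τ ⬝ᵥ τ) = 0 := by
    have h := hinner (w + c • τ)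
    rw [e2'] at h
    rw [dotProduct_add, dotProduct_smul] at h
    have : star τ ⬝ᵥ w = star τ ⬝ᵥ w + c * (star τ ⬝ᵥ τ) := by simpa using h
    linear_combination -this
  have hτ0 : τ = 0 := by
    have hz : star τ ⬝ᵥ τ = 0 := by
      rcases mul_eq_zero.mp hττ with h | h
      · exact absurd h hc
      · exact h
    have hre : (∑ k, Complex.normSq (τ k)) = 0 := by
      have hcast : star τ ⬝ᵥ τ = ((∑ k, Complex.normSq (τ k) : ℝ) : ℂ) := by
        simp [dotProduct, Complex.normSq_eq_conj_mul_self, Complex.ofReal_sum]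
      rw [hcast] at hz
      exact_mod_cast hz
    have hzk := (Finset.sum_eq_zero_iff_of_nonneg
      (fun k _ => Complex.normSq_nonneg (τ k))).mp hre
    funext k
    exact Complex.normSq_eq_zero.mp (hzk k (Finset.mem_univ k))
  have e1 := congrFun hv (Sum.inl ())
  simp [mulVec_idx, RU, Htr, hτ0, hlam] at e1
  rcases e1 with h | h
  · exact hne ⟨hτ0, by exact_mod_cast h⟩
  · exact hc h

theorem screw_parabolic_is_parabolic {m : ℕ} (hm : 1 ≤ m)
    (U : Matrix (Fin m) (Fin m) ℂ) (hU : U ∈ Matrix.unitaryGroup (Fin m) ℂ)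
    (τ : Fin m → ℂ) (t : ℝ) (hτ : U.mulVec τ = τ) (hne : ¬(τ = 0 ∧ t = 0)) :
    (¬ ∃ (lam : ℂ) (v : Idx m → ℂ),
        (RU U * Htr τ t).mulVec v = lam • v ∧ (hermJ v v).re < 0) ∧
    ¬ IsDiagonalizable (RU U * Htr τ t) := by
  constructor
  · rintro ⟨lam, v, hv, hneg⟩
    have hc0 : v (Sum.inr (Sum.inr ())) = 0 :=
      eigen_last_eq_zero U hU τ t hτ hne lam v hv
    have h1 : hermJ v v = ((∑ k, Complex.normSq (v (Sum.inr (Sum.inl k))) : ℝ) : ℂ) := by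
      simp [hermJ, dotProduct, Fintype.sum_sum_type, mulVec_idx, Jm, hc0,
        Complex.normSq_eq_conj_mul_self, Complex.ofReal_sum]
    rw [h1] at hneg
    simp only [Complex.ofReal_re] at hneg
    exact absurd hneg (not_lt.mpr (Finset.sum_nonneg fun k _ => Complex.normSq_nonneg _))
  · rintro ⟨P, hdet, hdiag⟩
    set T := RU U * Htr τ t with hT
    have hPinv : P * P⁻¹ = 1 := Matrix.mul_nonsing_inv P hdet
    have hTP : T * P = P * (P⁻¹ * T * P) := by
      rw [← Matrix.mul_assoc, ← Matrix.mul_assoc, hPinv, Matrix.one_mul]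
    have hcol : ∀ j, P (Sum.inr (Sum.inr ())) j = 0 := by
      intro j
      have hv : T.mulVec (fun i => P i j) = ((P⁻¹ * T * P) j j) • (fun i => P i j) := by
        funext i
        have h := congrFun (congrFun hTP i) j
        have hL : T.mulVec (fun i => P i j) i = (T * P) i j := by
          simp [Matrix.mul_apply, Matrix.mulVec, dotProduct]
        have hR : (P * (P⁻¹ * T * P)) i j = ((P⁻¹ * T * P) j j) * P i j := by
          rw [Matrix.mul_apply]
          rw [Finset.sum_eq_single j]
          · ring
          · intro k _ hk
            rw [hdiag hk, mul_zero]
          · intro hj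
            exact absurd (Finset.mem_univ j) hj
        rw [hL, h, hR]
        simp
      have := eigen_last_eq_zero U hU τ t hτ hne _ _ hv
      exact this
    have hdet0 : P.det = 0 := Matrix.det_eq_zero_of_row_eq_zero (Sum.inr (Sum.inr ())) hcol
    rw [hdet0] at hdet
    exact hdet.ne_zero rfl
end

section
/- Let V ∈ U(n−1), τ, σ ∈ ℂ^{n−1}, t, s ∈ ℝ. Then the Heisenberg isometry R_V T_{(σ,s)} commutes with the Heisenberg translation T_{(τ,t)} if and only if Vτ = τ and Im(τᴴσ) = 0. -/
set_option maxHeartbeats 1000000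


open Matrix Complex

theorem heisenberg_isometry_commutes_with_translation_iff {m : ℕ} (hm : 1 ≤ m)
    (V : Matrix (Fin m) (Fin m) ℂ) (hV : V ∈ Matrix.unitaryGroup (Fin m) ℂ)
    (τ σ : Fin m → ℂ) (t s : ℝ) :
    (RU V * Htr σ s) * Htr τ t = Htr τ t * (RU V * Htr σ s) ↔
      V.mulVec τ = τ ∧ (dotc τ σ).im = 0 := by
  have hVV : star V * V = 1 := Matrix.mem_unitaryGroup_iff'.mp hV
  -- helper: from V τ = τ derive τᴴ V = τᴴ pointwise
  have keyfact : V.mulVec τ = τ →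
      ∀ l, ∑ k, (starRingEnd ℂ) (τ k) * V k l = (starRingEnd ℂ) (τ l) := by
    intro hτ l
    have hs : (star V).mulVec τ = τ := by
      conv_lhs => rw [← hτ]
      rw [Matrix.mulVec_mulVec, hVV, Matrix.one_mulVec]
    have h0 := congrFun hs l
    simp [Matrix.mulVec, dotProduct, Matrix.star_apply] at h0
    calc ∑ k, (starRingEnd ℂ) (τ k) * V k l
        = (starRingEnd ℂ) (∑ k, (starRingEnd ℂ) (V k l) * τ k) := by
          rw [map_sum]; exact Finset.sum_congr rfl fun k _ => by
            simp [mul_comm]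
      _ = (starRingEnd ℂ) (τ l) := by rw [h0]
  have keysum : V.mulVec τ = τ →
      ∑ x, (starRingEnd ℂ) (τ x) * ∑ y, V x y * σ y = ∑ y, (starRingEnd ℂ) (τ y) * σ y := by
    intro hτ
    calc ∑ x, (starRingEnd ℂ) (τ x) * ∑ y, V x y * σ y
        = ∑ x, ∑ y, ((starRingEnd ℂ) (τ x) * V x y) * σ y := by
          simp [Finset.mul_sum, mul_assoc]
      _ = ∑ y, (∑ x, (starRingEnd ℂ) (τ x) * V x y) * σ y := by
          rw [Finset.sum_comm]
          exact Finset.sum_congr rfl fun y _ => (Finset.sum_mul _ _ _).symm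
      _ = ∑ y, (starRingEnd ℂ) (τ y) * σ y := by
          exact Finset.sum_congr rfl fun y _ => by rw [keyfact hτ y]
  constructor
  · intro h
    have h1 := fun k => congrFun (congrFun h (Sum.inr (Sum.inl k))) (Sum.inr (Sum.inr ()))
    have h2 := congrFun (congrFun h (Sum.inl ())) (Sum.inr (Sum.inr ()))
    simp [RU, Htr, Matrix.mul_apply, Fintype.sum_sum_type] at h1 h2
    have hτ : V.mulVec τ = τ := by
      funext k
      have := h1 k
      simp [Matrix.mulVec, dotProduct]
      linear_combination this
    refine ⟨hτ, ?_⟩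
    rw [keysum hτ] at h2
    have h3 : ∑ x, (starRingEnd ℂ) (σ x) * τ x = ∑ x, (starRingEnd ℂ) (τ x) * σ x := by
      linear_combination -h2
    rw [← Complex.conj_eq_iff_im]
    calc (starRingEnd ℂ) (dotc τ σ) = ∑ x, (starRingEnd ℂ) (σ x) * τ x := by
          simp [dotc, map_sum, mul_comm]
      _ = dotc τ σ := by rw [h3]; rfl
  · rintro ⟨hτ, him⟩
    have hτ' : ∀ k, ∑ x, V k x * τ x = τ k := by
      intro k
      have := congrFun hτ k
      simpa [Matrix.mulVec, dotProduct] using this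
    have hsym : ∑ x, (starRingEnd ℂ) (σ x) * τ x = ∑ x, (starRingEnd ℂ) (τ x) * σ x := by
      have h3 : (starRingEnd ℂ) (dotc τ σ) = dotc τ σ := Complex.conj_eq_iff_im.mpr him
      calc ∑ x, (starRingEnd ℂ) (σ x) * τ x = (starRingEnd ℂ) (dotc τ σ) := by
            simp [dotc, map_sum, mul_comm]
        _ = dotc τ σ := h3
        _ = ∑ x, (starRingEnd ℂ) (τ x) * σ x := rfl
    funext i j
    rcases i with _ | i <;> [skip; rcases i with i | _] <;>
      (rcases j with _ | j <;> [skip; rcases j with j | _]) <;>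
      simp [RU, Htr, Matrix.mul_apply, Fintype.sum_sum_type]
    · linear_combination keyfact hτ j
    · rw [keysum hτ]
      linear_combination -hsym
    · linear_combination hτ' i
end

section
/- Let T ∈ U(n,1) be parabolic, i.e. not diagonalizable, and let S ∈ U(n,1) commute with T. Then every eigenvalue of S has modulus 1 (in particular, S is not hyperbolic). -/
open Matrix Complex

/-- The first Hermitian form `⟨z,w⟩ = −w̄₀z₀ + ∑_{i=1}^{n} w̄ᵢzᵢ` of signature `(n,1)`
on `ℂ^{n+1}`. -/
noncomputable def herm (n : ℕ) (z w : Fin (n + 1) → ℂ) : ℂ :=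
  -((starRingEnd ℂ) (w 0) * z 0) + ∑ i : Fin n, (starRingEnd ℂ) (w i.succ) * z i.succ

/-- Membership in `U(n,1)`: `g ∈ GL(n+1,ℂ)` and `g` preserves the Hermitian form. -/
def InU1 (n : ℕ) (g : Matrix (Fin (n + 1)) (Fin (n + 1)) ℂ) : Prop :=
  IsUnit g ∧ ∀ z w : Fin (n + 1) → ℂ, herm n (g.mulVec z) (g.mulVec w) = herm n z w

section hermLemmas

variable {n : ℕ}

lemma herm_add_left (z z' w : Fin (n + 1) → ℂ) :
    herm n (z + z') w = herm n z w + herm n z' w := by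
  unfold herm
  simp only [Pi.add_apply, mul_add, Finset.sum_add_distrib]
  ring

lemma herm_smul_left (a : ℂ) (z w : Fin (n + 1) → ℂ) :
    herm n (a • z) w = a * herm n z w := by
  unfold herm
  simp only [Pi.smul_apply, smul_eq_mul]
  rw [mul_add, Finset.mul_sum]
  congr 1
  · ring
  · exact Finset.sum_congr rfl fun i _ => by ring

lemma herm_add_right (z w w' : Fin (n + 1) → ℂ) :
    herm n z (w + w') = herm n z w + herm n z w' := by
  unfold herm
  simp only [Pi.add_apply, map_add, add_mul, Finset.sum_add_distrib]
  ring

lemma herm_smul_right (a : ℂ) (z w : Fin (n + 1) → ℂ) :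
    herm n z (a • w) = (starRingEnd ℂ) a * herm n z w := by
  unfold herm
  simp only [Pi.smul_apply, smul_eq_mul, _root_.map_mul]
  rw [mul_add, Finset.mul_sum]
  congr 1
  · ring
  · exact Finset.sum_congr rfl fun i _ => by ring

lemma herm_sub_left (z z' w : Fin (n + 1) → ℂ) :
    herm n (z - z') w = herm n z w - herm n z' w := by
  have h : z - z' = z + (-1 : ℂ) • z' := by funext i; simp; ring
  rw [h, herm_add_left, herm_smul_left]; ring

lemma herm_sub_right (z w w' : Fin (n + 1) → ℂ) :
    herm n z (w - w') = herm n z w - herm n z w' := by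
  have h : w - w' = w + (-1 : ℂ) • w' := by funext i; simp; ring
  rw [h, herm_add_right, herm_smul_right, map_neg, _root_.map_one]; ring

lemma herm_conj (z w : Fin (n + 1) → ℂ) :
    (starRingEnd ℂ) (herm n w z) = herm n z w := by
  unfold herm
  rw [map_add, map_neg, _root_.map_mul, map_sum]
  congr 1
  · simp [mul_comm]
  · refine Finset.sum_congr rfl fun i _ => ?_
    rw [_root_.map_mul]
    simp [mul_comm]

lemma herm_zero_left (w : Fin (n + 1) → ℂ) : herm n 0 w = 0 := by
  simp [herm]

lemma herm_self (z : Fin (n + 1) → ℂ) (h0 : z 0 = 0) :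
    herm n z z = ((∑ i : Fin n, Complex.normSq (z i.succ) : ℝ) : ℂ) := by
  unfold herm
  rw [h0]
  push_cast
  simp [Complex.normSq_eq_conj_mul_self]

lemma herm_zero_vec (z : Fin (n + 1) → ℂ) (h0 : z 0 = 0) (h : herm n z z = 0) : z = 0 := by
  rw [herm_self z h0] at h
  have hr : (∑ i : Fin n, Complex.normSq (z i.succ)) = 0 := by exact_mod_cast h
  have hall : ∀ i ∈ (Finset.univ : Finset (Fin n)), Complex.normSq (z i.succ) = 0 :=
    (Finset.sum_eq_zero_iff_of_nonneg (fun i _ => Complex.normSq_nonneg _)).mp hr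
  funext i
  simp only [Pi.zero_apply]
  cases i using Fin.cases with
  | zero => exact h0
  | succ j => exact Complex.normSq_eq_zero.mp (hall j (Finset.mem_univ j))

lemma herm_dep {n : ℕ} {u w : Fin (n + 1) → ℂ} (huu : herm n u u = 0) (hww : herm n w w = 0)
    (huw : herm n u w = 0) (hwu : herm n w u = 0) :
    (∃ k : ℂ, u = k • w) ∨ (∃ k : ℂ, w = k • u) := by
  by_cases h0 : u 0 = 0
  · exact Or.inl ⟨0, by rw [zero_smul]; exact herm_zero_vec u h0 huu⟩
  · right
    set z := u 0 • w - w 0 • u with hz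
    have hz0 : z 0 = 0 := by simp only [hz, Pi.sub_apply, Pi.smul_apply, smul_eq_mul]; ring
    have hzz : herm n z z = 0 := by
      rw [hz]
      simp only [herm_sub_left, herm_sub_right, herm_smul_left, herm_smul_right, huu, hww, huw, hwu]
      ring
    have hzzero : z = 0 := herm_zero_vec z hz0 hzz
    have heq : u 0 • w = w 0 • u := by rwa [sub_eq_zero] at hzzero
    refine ⟨w 0 * (u 0)⁻¹, ?_⟩
    calc w = (u 0)⁻¹ • (u 0 • w) := by rw [smul_smul, inv_mul_cancel₀ h0, one_smul]
    _ = (u 0)⁻¹ • (w 0 • u) := by rw [heq]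
    _ = (w 0 * (u 0)⁻¹) • u := by rw [smul_smul, mul_comm]

end hermLemmas

lemma mulVec_eq_zero_of_isUnit {m : ℕ} {A : Matrix (Fin m) (Fin m) ℂ} (hA : IsUnit A)
    {x : Fin m → ℂ} (h : A *ᵥ x = 0) : x = 0 := by
  have hd : IsUnit A.det := (Matrix.isUnit_iff_isUnit_det A).mp hA
  calc x = (A⁻¹ * A) *ᵥ x := by rw [Matrix.nonsing_inv_mul A hd, Matrix.one_mulVec]
  _ = A⁻¹ *ᵥ (A *ᵥ x) := (Matrix.mulVec_mulVec x A⁻¹ A).symm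
  _ = 0 := by rw [h, Matrix.mulVec_zero]

lemma smul_cancel {m : ℕ} {u : Fin m → ℂ} (hu : u ≠ 0) {p q : ℂ} (h : p • u = q • u) : p = q := by
  have h2 : (p - q) • u = 0 := by rw [sub_smul, h, sub_self]
  rcases smul_eq_zero.mp h2 with h1 | h1
  · exact sub_eq_zero.mp h1
  · exact absurd h1 hu

open Module in
lemma isDiagonalizable_of_no_chain {m : ℕ} (A : Matrix (Fin m) (Fin m) ℂ)
    (h : ∀ (μ : ℂ) (x : Fin m → ℂ),
      A *ᵥ (A *ᵥ x - μ • x) = μ • (A *ᵥ x - μ • x) → A *ᵥ x - μ • x = 0) :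
    IsDiagonalizable A := by
  classical
  set f : Module.End ℂ (Fin m → ℂ) := Matrix.mulVecLin A with hf
  have happ : ∀ (μ : ℂ) (y : Fin m → ℂ),
      (f - μ • (1 : Module.End ℂ (Fin m → ℂ))) y = A *ᵥ y - μ • y := by
    intro μ y
    simp [hf, Matrix.mulVecLin_apply]
  have hker : ∀ μ : ℂ, LinearMap.ker ((f - μ • 1) ^ 1)
      = LinearMap.ker ((f - μ • 1) ^ Nat.succ 1) := by
    intro μ
    apply le_antisymm
    · intro x hx
      rw [LinearMap.mem_ker, pow_one] at hx
      rw [LinearMap.mem_ker, pow_succ, pow_one, Module.End.mul_apply, hx, map_zero]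
    · intro x hx
      rw [LinearMap.mem_ker, pow_succ, pow_one, Module.End.mul_apply, happ, happ] at hx
      rw [LinearMap.mem_ker, pow_one, happ]
      exact h μ x (sub_eq_zero.mp hx)
  have hmax : ∀ μ : ℂ, f.maxGenEigenspace μ ≤ f.genEigenspace μ 1 := by
    intro μ x hx
    rw [Module.End.mem_maxGenEigenspace] at hx
    obtain ⟨k, hk⟩ := hx
    rw [Module.End.genEigenspace_one, LinearMap.mem_ker]
    rcases Nat.eq_zero_or_pos k with hk0 | hkpos
    · subst hk0
      simp only [pow_zero, Module.End.one_apply] at hk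
      rw [hk, map_zero]
    · have hconst := Module.End.ker_pow_constant (hker μ) (k - 1)
      have hk1 : 1 + (k - 1) = k := by omega
      rw [hk1] at hconst
      have hx' : x ∈ LinearMap.ker ((f - μ • 1) ^ k) := hk
      rw [← hconst] at hx'
      simpa [pow_one] using hx'
  have htop : ⨆ μ : ℂ, f.genEigenspace μ 1 = ⊤ := by
    refine le_antisymm le_top ?_
    rw [← Module.End.iSup_maxGenEigenspace_eq_top f]
    exact iSup_mono hmax
  have hind : iSupIndep (fun μ : ℂ => f.genEigenspace μ 1) :=
    Module.End.independent_genEigenspace f 1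
  have hInt : DirectSum.IsInternal (fun μ : ℂ => f.genEigenspace μ 1) :=
    DirectSum.isInternal_submodule_of_iSupIndep_of_iSup_eq_top hind htop
  let bB := hInt.collectedBasis (fun μ => Basis.ofVectorSpace ℂ (f.genEigenspace μ 1))
  haveI : Fintype (Σ μ : ℂ, Basis.ofVectorSpaceIndex ℂ (f.genEigenspace μ 1)) :=
    FiniteDimensional.fintypeBasisIndex bB
  have hcard : Fintype.card (Σ μ : ℂ, Basis.ofVectorSpaceIndex ℂ (f.genEigenspace μ 1)) = m := by
    rw [← Module.finrank_eq_card_basis bB, Module.finrank_fintype_fun_eq_card, Fintype.card_fin]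
  let e := Fintype.equivFinOfCardEq hcard
  let b := bB.reindex e
  have hb : ∀ j, A *ᵥ (b j) = (e.symm j).1 • b j := by
    intro j
    have hmem := hInt.collectedBasis_mem
      (fun μ => Basis.ofVectorSpace ℂ (f.genEigenspace μ 1)) (e.symm j)
    rw [Module.End.mem_genEigenspace_one] at hmem
    have : b j = bB (e.symm j) := by simp [b, Basis.reindex_apply]
    rw [this]
    exact hmem
  set d : Fin m → ℂ := fun j => (e.symm j).1 with hd
  set P : Matrix (Fin m) (Fin m) ℂ := Matrix.of (fun i j => b j i) with hP
  have hPb : P = (Pi.basisFun ℂ (Fin m)).toMatrix (⇑b) := by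
    ext i j
    simp [hP, Basis.toMatrix_apply]
  have hPinv : IsUnit P.det := by
    rw [hPb]
    haveI := (Pi.basisFun ℂ (Fin m)).invertibleToMatrix b
    exact Matrix.isUnit_det_of_invertible _
  have hAP : A * P = P * Matrix.diagonal d := by
    ext i j
    have h1 : (A *ᵥ (b j)) i = d j * b j i := by rw [hb j]; simp [hd]
    calc (A * P) i j = (A *ᵥ (b j)) i := by
          simp [Matrix.mul_apply, hP, Matrix.mulVec, dotProduct]
    _ = d j * b j i := h1
    _ = (P * Matrix.diagonal d) i j := by rw [Matrix.mul_diagonal]; simp [hP]; ring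
  refine ⟨P, hPinv, ?_⟩
  have : P⁻¹ * A * P = Matrix.diagonal d := by
    rw [Matrix.mul_assoc, hAP, ← Matrix.mul_assoc, Matrix.nonsing_inv_mul P hPinv, Matrix.one_mul]
  rw [this]
  exact Matrix.isDiag_diagonal d

theorem commutes_with_parabolic_eigenvalues_unimodular {n : ℕ} (hn : 1 ≤ n)
    (T S : Matrix (Fin (n + 1)) (Fin (n + 1)) ℂ) (hT : InU1 n T) (hS : InU1 n S)
    (hpar : ¬ IsDiagonalizable T) (hcomm : S * T = T * S) :
    ∀ (lam : ℂ) (v : Fin (n + 1) → ℂ), v ≠ 0 → S.mulVec v = lam • v →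
      ‖lam‖ = 1 := by
  intro lam v hv hev
  by_contra hab
  obtain ⟨hTu, hBT⟩ := hT
  obtain ⟨hSu, hBS⟩ := hS
  have hlam0 : lam ≠ 0 := by
    intro h
    apply hv
    apply mulVec_eq_zero_of_isUnit hSu
    rw [hev, h, zero_smul]
  have hns : Complex.normSq lam ≠ 1 := by
    intro h
    apply hab
    have h2 : ‖lam‖ ^ 2 = 1 := by rw [Complex.sq_norm, h]
    nlinarith [norm_nonneg lam]
  -- eigenvectors with non-unimodular eigenvalue are null
  have null_of_eig : ∀ (ρ : ℂ) (u : Fin (n + 1) → ℂ), Complex.normSq ρ ≠ 1 →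
      S *ᵥ u = ρ • u → herm n u u = 0 := by
    intro ρ u hρ hu
    have hpre := hBS u u
    rw [hu, herm_smul_left, herm_smul_right] at hpre
    have hnn : (Complex.normSq ρ : ℂ) = ρ * (starRingEnd ℂ) ρ := by
      rw [Complex.mul_conj]
    have h2 : ((Complex.normSq ρ : ℂ) - 1) * herm n u u = 0 := by
      linear_combination hpre + herm n u u * hnn
    rcases mul_eq_zero.mp h2 with h | h
    · exfalso
      apply hρ
      have : (Complex.normSq ρ : ℂ) = 1 := by linear_combination h
      exact_mod_cast this
    · exact h
  have orth_of_eig : ∀ (ρ σ : ℂ) (u w : Fin (n + 1) → ℂ), ρ * (starRingEnd ℂ) σ ≠ 1 →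
      S *ᵥ u = ρ • u → S *ᵥ w = σ • w → herm n u w = 0 := by
    intro ρ σ u w hρσ hu hw
    have hpre := hBS u w
    rw [hu, hw, herm_smul_left, herm_smul_right] at hpre
    have h2 : (ρ * (starRingEnd ℂ) σ - 1) * herm n u w = 0 := by
      linear_combination hpre
    rcases mul_eq_zero.mp h2 with h | h
    · exact absurd (by linear_combination h) hρσ
    · exact h
  -- the dual eigenvalue
  set mu := ((starRingEnd ℂ) lam)⁻¹ with hmu
  have hconjlam : (starRingEnd ℂ) lam ≠ 0 := by simpa using hlam0
  have hmu0 : mu ≠ 0 := inv_ne_zero hconjlam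
  have hnsmu : Complex.normSq mu ≠ 1 := by
    rw [hmu, map_inv₀, Complex.normSq_conj]
    intro h
    exact hns (inv_eq_one.mp h)
  -- a left eigenvector with eigenvalue mu
  set fv : Fin (n + 1) → ℂ := fun i => (if i = 0 then (-1 : ℂ) else 1) * (starRingEnd ℂ) (v i)
    with hfv
  have hfdot : ∀ w, fv ⬝ᵥ w = (starRingEnd ℂ) (herm n v w) := by
    intro w
    unfold herm
    rw [map_add, map_neg, _root_.map_mul, map_sum, dotProduct, Fin.sum_univ_succ]
    simp only [hfv, if_true, Fin.succ_ne_zero, if_false, Complex.conj_conj]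
    congr 1
    · simp; ring
    · refine Finset.sum_congr rfl fun i _ => ?_
      rw [_root_.map_mul]
      simp [Complex.conj_conj]
      ring
  have hvSw : ∀ w, herm n v (S *ᵥ w) = lam⁻¹ * herm n v w := by
    intro w
    have hpre := hBS v w
    rw [hev, herm_smul_left] at hpre
    rw [← hpre, ← mul_assoc, inv_mul_cancel₀ hlam0, one_mul]
  have hfS : ∀ w, fv ⬝ᵥ (S *ᵥ w) = mu * (fv ⬝ᵥ w) := by
    intro w
    rw [hfdot, hfdot, hvSw, _root_.map_mul, map_inv₀, hmu]
  have hfne : fv ≠ 0 := by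
    intro h
    apply hv
    funext i
    have := congrFun h i
    simp only [hfv, Pi.zero_apply] at this
    rcases eq_or_ne i 0 with hi | hi
    · subst hi
      simp only [if_pos rfl] at this
      simpa using this
    · simp only [if_neg hi] at this
      simpa using this
  have hdetT : ((S - mu • 1)ᵀ).det = 0 := by
    rw [← Matrix.exists_mulVec_eq_zero_iff]
    refine ⟨fv, hfne, ?_⟩
    rw [Matrix.mulVec_transpose, Matrix.vecMul_sub]
    have h1 : fv ᵥ* S = mu • fv := by
      funext j
      have h2 := hfS (Pi.single j 1)
      rw [Matrix.mulVec_single, dotProduct_single, mul_one] at h2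
      simpa [Matrix.vecMul, dotProduct, mul_one] using h2
    have h2 : fv ᵥ* (mu • (1 : Matrix (Fin (n + 1)) (Fin (n + 1)) ℂ)) = mu • fv := by
      funext j
      simp [Matrix.vecMul, dotProduct, Matrix.smul_apply, Matrix.one_apply, Finset.mul_sum,
        mul_comm]
    rw [h1, h2, sub_self]
  have hdet : (S - mu • 1).det = 0 := by rwa [Matrix.det_transpose] at hdetT
  obtain ⟨v₂, hv₂0, hv₂⟩ := Matrix.exists_mulVec_eq_zero_iff.mpr hdet
  have hev2 : S *ᵥ v₂ = mu • v₂ := by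
    rw [Matrix.sub_mulVec, Matrix.smul_mulVec, Matrix.one_mulVec] at hv₂
    exact sub_eq_zero.mp hv₂
  -- null and pairing facts
  have hvv : herm n v v = 0 := null_of_eig lam v hns hev
  have hv2v2 : herm n v₂ v₂ = 0 := null_of_eig mu v₂ hnsmu hev2
  set c := herm n v₂ v with hc
  have hvv2 : herm n v v₂ = (starRingEnd ℂ) c := by rw [hc, herm_conj]
  have hmulam : mu ≠ lam := by
    intro h
    apply hns
    have h1 : Complex.normSq lam = (Complex.normSq lam)⁻¹ := by
      conv_lhs => rw [← h]
      rw [hmu, map_inv₀, Complex.normSq_conj]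
    have h2 : Complex.normSq lam * Complex.normSq lam = 1 := by
      have hlns : Complex.normSq lam ≠ 0 := by simpa using hlam0
      field_simp at h1
      linarith [h1]
    have h3 : (Complex.normSq lam - 1) * (Complex.normSq lam + 1) = 0 := by ring_nf; linarith
    rcases mul_eq_zero.mp h3 with h4 | h4
    · linarith
    · nlinarith [Complex.normSq_nonneg lam]
  have hcne : c ≠ 0 := by
    intro h
    have hv2v : herm n v₂ v = 0 := by rw [← hc]; exact h
    have hvv2' : herm n v v₂ = 0 := by rw [hvv2, h, map_zero]
    have hlameq : lam = mu := by
      rcases herm_dep hv2v2 hvv hv2v hvv2' with ⟨k, hk⟩ | ⟨k, hk⟩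
      · -- v₂ = k • v
        have hk0 : k ≠ 0 := by intro h0; exact hv₂0 (by rw [hk, h0, zero_smul])
        have heq := hev2
        rw [hk, Matrix.mulVec_smul, hev, smul_smul, smul_smul] at heq
        have h5 : k * lam = mu * k := smul_cancel hv heq
        have := mul_left_cancel₀ hk0 (by linear_combination h5 : k * lam = k * mu)
        exact this
      · -- v = k • v₂
        have hk0 : k ≠ 0 := by intro h0; exact hv (by rw [hk, h0, zero_smul])
        have heq := hev
        rw [hk, Matrix.mulVec_smul, hev2, smul_smul, smul_smul] at heq
        have h5 : k * mu = lam * k := smul_cancel hv₂0 heq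
        exact (mul_left_cancel₀ hk0 (by linear_combination h5 : k * mu = k * lam)).symm
    exact hmulam hlameq.symm
  -- T preserves the two eigenlines
  have mkTeig : ∀ (ρ : ℂ) (u : Fin (n + 1) → ℂ), u ≠ 0 → Complex.normSq ρ ≠ 1 →
      S *ᵥ u = ρ • u → ∃ k : ℂ, k ≠ 0 ∧ T *ᵥ u = k • u := by
    intro ρ u hu hρ heu
    set t := T *ᵥ u with htdef
    have ht0 : t ≠ 0 := fun h => hu (mulVec_eq_zero_of_isUnit hTu h)
    have hSt : S *ᵥ t = ρ • t := by
      rw [htdef, Matrix.mulVec_mulVec, hcomm, ← Matrix.mulVec_mulVec, heu, Matrix.mulVec_smul]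
    have hρρ : ρ * (starRingEnd ℂ) ρ ≠ 1 := by
      rw [Complex.mul_conj]
      intro h
      exact hρ (by exact_mod_cast h)
    have htt : herm n t t = 0 := null_of_eig ρ t hρ hSt
    have huu : herm n u u = 0 := null_of_eig ρ u hρ heu
    have htu : herm n t u = 0 := orth_of_eig ρ ρ t u hρρ hSt heu
    have hut : herm n u t = 0 := by rw [← herm_conj, htu, map_zero]
    rcases herm_dep htt huu htu hut with ⟨k, hk⟩ | ⟨k, hk⟩
    · refine ⟨k, ?_, hk⟩
      intro h
      exact ht0 (by rw [hk, h, zero_smul])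
    · have hk0 : k ≠ 0 := fun h => hu (by rw [hk, h, zero_smul])
      refine ⟨k⁻¹, inv_ne_zero hk0, ?_⟩
      show t = k⁻¹ • u
      rw [hk, smul_smul, inv_mul_cancel₀ hk0, one_smul]
  obtain ⟨mu1, hmu1, hTv⟩ := mkTeig lam v hv hns hev
  obtain ⟨mu2, hmu2, hTv2⟩ := mkTeig mu v₂ hv₂0 hnsmu hev2
  -- T preserves orthogonality to v and v₂
  have Torth1 : ∀ w, herm n w v = 0 → herm n (T *ᵥ w) v = 0 := by
    intro w hw
    have hpre := hBT w v
    rw [hTv, herm_smul_right, hw] at hpre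
    exact (mul_eq_zero.mp hpre).resolve_left (by simpa using hmu1)
  have Torth2 : ∀ w, herm n w v₂ = 0 → herm n (T *ᵥ w) v₂ = 0 := by
    intro w hw
    have hpre := hBT w v₂
    rw [hTv2, herm_smul_right, hw] at hpre
    exact (mul_eq_zero.mp hpre).resolve_left (by simpa using hmu2)
  -- positivity on the orthogonal complement
  have hv0ne : v 0 ≠ 0 := fun h => hv (herm_zero_vec v h hvv)
  have hcconj : (starRingEnd ℂ) c ≠ 0 := by simpa using hcne
  have hpos : ∀ w, herm n w v = 0 → ∃ r : ℝ, 0 ≤ r ∧ herm n w w = (r : ℂ) ∧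
      (herm n w v₂ = 0 → herm n w w = 0 → w = 0) := by
    intro w hw
    set t := w 0 / v 0 with htdef
    set z := w - t • v with hzdef
    have hz0 : z 0 = 0 := by
      simp only [hzdef, Pi.sub_apply, Pi.smul_apply, smul_eq_mul, htdef]
      field_simp
      ring
    have hwv : herm n v w = 0 := by rw [← herm_conj, hw, map_zero]
    have hzz : herm n z z = herm n w w := by
      rw [hzdef]
      simp only [herm_sub_left, herm_sub_right, herm_smul_left, herm_smul_right, hw, hwv, hvv]
      ring
    refine ⟨∑ i : Fin n, Complex.normSq (z i.succ),
      Finset.sum_nonneg (fun i _ => Complex.normSq_nonneg _), ?_, ?_⟩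
    · rw [← hzz, herm_self z hz0]
    · intro hwv2 hww
      have hz : z = 0 := herm_zero_vec z hz0 (by rw [hzz, hww])
      have hwt : w = t • v := by
        have := sub_eq_zero.mp hz
        rw [hzdef] at hz
        rwa [sub_eq_zero] at hz
      have hwc : herm n w v₂ = t * ((starRingEnd ℂ) c) := by
        rw [hwt, herm_smul_left, hvv2]
      rw [hwc] at hwv2
      rcases mul_eq_zero.mp hwv2 with h | h
      · rw [hwt, h, zero_smul]
      · exact absurd h hcconj
  -- Jordan chain from non-diagonalizability
  have hchain : ∃ (μ : ℂ) (x : Fin (n + 1) → ℂ),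
      T *ᵥ (T *ᵥ x - μ • x) = μ • (T *ᵥ x - μ • x) ∧ T *ᵥ x - μ • x ≠ 0 := by
    by_contra h
    push_neg at h
    exact hpar (isDiagonalizable_of_no_chain T h)
  obtain ⟨μ, x, hch1, hch2⟩ := hchain
  set y := T *ᵥ x - μ • x with hydef
  -- decompose x
  set a := herm n x v₂ / (starRingEnd ℂ) c with hadef
  set b := herm n x v / c with hbdef
  set w := x - a • v - b • v₂ with hwdef
  have hwv : herm n w v = 0 := by
    rw [hwdef]
    simp only [herm_sub_left, herm_smul_left, hvv, ← hc]
    rw [hbdef]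
    field_simp
    ring
  have hwv2 : herm n w v₂ = 0 := by
    rw [hwdef]
    simp only [herm_sub_left, herm_smul_left, hvv2, hv2v2]
    rw [hadef]
    field_simp
    ring
  have hx_eq : x = a • v + b • v₂ + w := by rw [hwdef]; module
  set u := T *ᵥ w - μ • w with hudef
  have hu1 : herm n u v = 0 := by
    rw [hudef, herm_sub_left, herm_smul_left, Torth1 w hwv, hwv]
    ring
  have hu2 : herm n u v₂ = 0 := by
    rw [hudef, herm_sub_left, herm_smul_left, Torth2 w hwv2, hwv2]
    ring
  have hy_eq : y = (a * (mu1 - μ)) • v + (b * (mu2 - μ)) • v₂ + u := by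
    rw [hydef, hudef]
    conv_lhs => rw [hx_eq]
    rw [Matrix.mulVec_add, Matrix.mulVec_add, Matrix.mulVec_smul, Matrix.mulVec_smul, hTv, hTv2]
    module
  have hTy : T *ᵥ y = μ • y := hch1
  have hTu1 : herm n (T *ᵥ u) v = 0 := Torth1 u hu1
  have hTu2 : herm n (T *ᵥ u) v₂ = 0 := Torth2 u hu2
  have hexp : T *ᵥ y - μ • y = (a * (mu1 - μ) * (mu1 - μ)) • v + (b * (mu2 - μ) * (mu2 - μ)) • v₂
      + (T *ᵥ u - μ • u) := by
    conv_lhs => rw [hy_eq]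
    rw [Matrix.mulVec_add, Matrix.mulVec_add, Matrix.mulVec_smul, Matrix.mulVec_smul, hTv, hTv2]
    module
  have hkey : (a * (mu1 - μ) * (mu1 - μ)) • v + (b * (mu2 - μ) * (mu2 - μ)) • v₂
      + (T *ᵥ u - μ • u) = 0 := by
    rw [← hexp, hTy, sub_self]
  have ha0 : a * (mu1 - μ) = 0 := by
    have e1 := congrArg (fun z => herm n z v₂) hkey
    simp only [herm_add_left, herm_smul_left, herm_sub_left, hvv2, hv2v2, hTu2, hu2,
      herm_zero_left] at e1
    have h2 : a * (mu1 - μ) * (mu1 - μ) = 0 := by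
      have h3 : a * (mu1 - μ) * (mu1 - μ) * (starRingEnd ℂ) c = 0 := by linear_combination e1
      exact (mul_eq_zero.mp h3).resolve_right hcconj
    rcases mul_eq_zero.mp h2 with h | h
    · exact h
    · rw [h, mul_zero]
  have hb0 : b * (mu2 - μ) = 0 := by
    have e1 := congrArg (fun z => herm n z v) hkey
    simp only [herm_add_left, herm_smul_left, herm_sub_left, hvv, ← hc, hTu1, hu1,
      herm_zero_left] at e1
    have h2 : b * (mu2 - μ) * (mu2 - μ) = 0 := by
      have h3 : b * (mu2 - μ) * (mu2 - μ) * c = 0 := by linear_combination e1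
      exact (mul_eq_zero.mp h3).resolve_right hcne
    rcases mul_eq_zero.mp h2 with h | h
    · exact h
    · rw [h, mul_zero]
  have hyu : y = u := by
    rw [hy_eq]
    have c1 : a * (mu1 - μ) = 0 := ha0
    have c2 : b * (mu2 - μ) = 0 := hb0
    rw [c1, c2, zero_smul, zero_smul, zero_add, zero_add]
  have hyv : herm n y v = 0 := by rw [hyu]; exact hu1
  have hyv2 : herm n y v₂ = 0 := by rw [hyu]; exact hu2
  obtain ⟨r, hr0, hry, hdefinite⟩ := hpos y hyv
  have hrne : herm n y y ≠ 0 := fun h => hch2 (hdefinite hyv2 h)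
  have hrne' : (r : ℂ) ≠ 0 := by rw [← hry]; exact hrne
  -- |mu| = 1
  have hmuy := hBT y y
  rw [hTy, herm_smul_left, herm_smul_right] at hmuy
  have hmc : (Complex.normSq μ : ℂ) = μ * (starRingEnd ℂ) μ := by rw [Complex.mul_conj]
  have hmuns : (Complex.normSq μ : ℂ) = 1 := by
    have h2 : ((Complex.normSq μ : ℂ) - 1) * herm n y y = 0 := by
      linear_combination hmuy + herm n y y * hmc
    rcases mul_eq_zero.mp h2 with h | h
    · linear_combination h
    · exact absurd h hrne
  have hmu0' : μ ≠ 0 := by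
    intro h
    rw [h] at hmuns
    simp at hmuns
  -- final contradiction
  have hfin := hBT x y
  have hTx : T *ᵥ x = μ • x + y := by rw [hydef]; module
  rw [hTx, hTy, herm_add_left, herm_smul_left, herm_smul_right, herm_smul_right] at hfin
  have hfinal : (starRingEnd ℂ) μ * herm n y y = 0 := by
    linear_combination hfin + herm n x y * hmc - herm n x y * hmuns
  rcases mul_eq_zero.mp hfinal with h | h
  · exact hmu0' (by simpa using h)
  · exact hrne h
end

section
/- Let g ∈ U(n,1) (with respect to the second Hermitian form) fix the point ∞, i.e. g·e₁ ∈ ℂ·e₁ where e₁ = (1,0,…,0)ᵗ. Then there exist unique μ ∈ ℂ with |μ| = 1, r > 0, U ∈ U(n−1), τ ∈ ℂ^{n−1} and t ∈ ℝ such that g = μ · D_r · R_U · T_{(τ,t)}. (Thus the stabilizer of ∞ in U(n,1) is [S¹ × ℝ⁺ × U(n−1)] ⋉ 𝔑_n.) -/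
open Matrix Complex

set_option maxHeartbeats 1000000

noncomputable def Mblk {m : ℕ} (μ : ℂ) (r : ℝ) (U : Matrix (Fin m) (Fin m) ℂ)
    (τ : Fin m → ℂ) (t : ℝ) : Matrix (Idx m) (Idx m) ℂ :=
  Matrix.of fun i j =>
    match i, j with
    | Sum.inl _, Sum.inl _ => μ * r
    | Sum.inl _, Sum.inr (Sum.inl l) => -(μ * r * (starRingEnd ℂ) (τ l))
    | Sum.inl _, Sum.inr (Sum.inr _) =>
        μ * r * ((-(((∑ k, Complex.normSq (τ k) : ℝ)) : ℂ) + (t : ℂ) * Complex.I) / 2)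
    | Sum.inr (Sum.inl k), Sum.inr (Sum.inl l) => μ * U k l
    | Sum.inr (Sum.inl k), Sum.inr (Sum.inr _) => μ * ∑ l, U k l * τ l
    | Sum.inr (Sum.inr _), Sum.inr (Sum.inr _) => μ * ((r : ℂ))⁻¹
    | _, _ => 0

lemma prod_eq {m : ℕ} (μ : ℂ) (r : ℝ) (U : Matrix (Fin m) (Fin m) ℂ)
    (τ : Fin m → ℂ) (t : ℝ) :
    μ • (Dil (m := m) r * RU U * Htr τ t) = Mblk μ r U τ t := by
  ext i j
  rcases i with _ | k | _ <;> rcases j with _ | l | _ <;>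
    simp [Matrix.mul_apply, Fintype.sum_sum_type, Dil, RU, Htr, Mblk, Finset.mul_sum] <;>
    first
      | ring
      | (apply Finset.sum_congr rfl; intros; ring)

lemma key_of {m : ℕ} (g : Matrix (Idx m) (Idx m) ℂ) (h2 : gᴴ * Jm m * g = Jm m) :
    ∀ i j, (starRingEnd ℂ) (g (Sum.inl ()) i) * g (Sum.inr (Sum.inr ())) j
      + (starRingEnd ℂ) (g (Sum.inr (Sum.inr ())) i) * g (Sum.inl ()) j
      + ∑ k, (starRingEnd ℂ) (g (Sum.inr (Sum.inl k)) i) * g (Sum.inr (Sum.inl k)) j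
      = Jm m i j := by
  intro i j
  have := congrFun (congrFun h2 i) j
  simp only [Matrix.mul_apply, conjTranspose_apply, Jm, Matrix.of_apply,
    Fintype.sum_sum_type, Finset.univ_unique, Finset.sum_singleton, mul_zero, zero_mul,
    mul_one, one_mul, add_zero, zero_add, Finset.sum_const_zero, mul_ite,
    Finset.sum_ite_eq', Finset.mem_univ, if_true] at this
  simp only [Jm, Matrix.of_apply, starRingEnd_apply]
  linear_combination this

lemma aux_decomp {m : ℕ} (g : Matrix (Idx m) (Idx m) ℂ)
    (hz1 : ∀ k, g (Sum.inr (Sum.inl k)) (Sum.inl ()) = 0)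
    (hz2 : g (Sum.inr (Sum.inr ())) (Sum.inl ()) = 0)
    (key : ∀ i j, (starRingEnd ℂ) (g (Sum.inl ()) i) * g (Sum.inr (Sum.inr ())) j
      + (starRingEnd ℂ) (g (Sum.inr (Sum.inr ())) i) * g (Sum.inl ()) j
      + ∑ k, (starRingEnd ℂ) (g (Sum.inr (Sum.inl k)) i) * g (Sum.inr (Sum.inl k)) j
      = Jm m i j) :
    ∃! p : ℂ × ℝ × Matrix (Fin m) (Fin m) ℂ × (Fin m → ℂ) × ℝ,
      ‖p.1‖ = 1 ∧ 0 < p.2.1 ∧ p.2.2.1 ∈ Matrix.unitaryGroup (Fin m) ℂ ∧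
        g = p.1 • (Dil p.2.1 * RU p.2.2.1 * Htr p.2.2.2.1 p.2.2.2.2) := by
  set a : ℂ := g (Sum.inl ()) (Sum.inl ()) with ha_def
  set d : ℂ := g (Sum.inl ()) (Sum.inr (Sum.inr ())) with hd_def
  set hN : ℂ := g (Sum.inr (Sum.inr ())) (Sum.inr (Sum.inr ())) with hN_def
  have F1 : (starRingEnd ℂ) a * hN = 1 := by
    have := key (Sum.inl ()) (Sum.inr (Sum.inr ()))
    simp [hz1, hz2, Jm] at this
    linear_combination this
  have F2 : ∀ l, (starRingEnd ℂ) a * g (Sum.inr (Sum.inr ())) (Sum.inr (Sum.inl l)) = 0 := by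
    intro l
    have := key (Sum.inl ()) (Sum.inr (Sum.inl l))
    simpa [hz1, hz2, Jm] using this
  have ha : a ≠ 0 := by
    intro h
    rw [h] at F1; simp at F1
  have hf : ∀ l, g (Sum.inr (Sum.inr ())) (Sum.inr (Sum.inl l)) = 0 := by
    intro l
    have hca : (starRingEnd ℂ) a ≠ 0 := by simpa using ha
    exact (mul_eq_zero.mp (F2 l)).resolve_left hca
  have F3 : ∀ k l, ∑ j, (starRingEnd ℂ) (g (Sum.inr (Sum.inl j)) (Sum.inr (Sum.inl k)))
      * g (Sum.inr (Sum.inl j)) (Sum.inr (Sum.inl l)) = if k = l then 1 else 0 := by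
    intro k l
    have := key (Sum.inr (Sum.inl k)) (Sum.inr (Sum.inl l))
    simpa [hf, Jm] using this
  have F4 : ∀ l, ∑ j, (starRingEnd ℂ) (g (Sum.inr (Sum.inl j)) (Sum.inr (Sum.inl l)))
      * g (Sum.inr (Sum.inl j)) (Sum.inr (Sum.inr ())) = -((starRingEnd ℂ) (g (Sum.inl ()) (Sum.inr (Sum.inl l)))) * hN := by
    intro l
    have := key (Sum.inr (Sum.inl l)) (Sum.inr (Sum.inr ()))
    simp [hf, Jm] at this
    linear_combination this
  have F5 : (starRingEnd ℂ) d * hN + (starRingEnd ℂ) hN * d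
      + ∑ j, (starRingEnd ℂ) (g (Sum.inr (Sum.inl j)) (Sum.inr (Sum.inr ())))
        * g (Sum.inr (Sum.inl j)) (Sum.inr (Sum.inr ())) = 0 := by
    have := key (Sum.inr (Sum.inr ())) (Sum.inr (Sum.inr ()))
    simpa [Jm] using this
  -- basic quantities
  have hca : (starRingEnd ℂ) a ≠ 0 := by simpa using ha
  have hr : 0 < ‖a‖ := norm_pos_iff.mpr ha
  set r : ℝ := ‖a‖ with hr_def
  have hrC : (r : ℂ) ≠ 0 := Complex.ofReal_ne_zero.mpr (ne_of_gt hr)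
  set μ : ℂ := a / (r : ℂ) with hμ_def
  have haμ : a = μ * r := by rw [hμ_def]; exact (div_mul_cancel₀ a hrC).symm
  have hμabs : ‖μ‖ = 1 := by
    rw [hμ_def, norm_div, Complex.norm_real, Real.norm_eq_abs, abs_of_pos hr, div_self (ne_of_gt hr)]
  have hμμ : μ * (starRingEnd ℂ) μ = 1 := by
    rw [Complex.mul_conj, Complex.normSq_eq_norm_sq, hμabs]; norm_num
  have hconj_a : (starRingEnd ℂ) a = (starRingEnd ℂ) μ * r := by
    rw [haμ]; simp [Complex.conj_ofReal]
  have hNval : hN = μ * (r : ℂ)⁻¹ := by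
    have h1 : (starRingEnd ℂ) a * (μ * (r : ℂ)⁻¹) = 1 := by
      rw [hconj_a]
      have e2 : (r : ℂ) * ((r : ℂ))⁻¹ = 1 := mul_inv_cancel₀ hrC
      linear_combination ((starRingEnd ℂ) μ * μ) * e2 + hμμ
    exact mul_left_cancel₀ hca (F1.trans h1.symm)
  -- the blocks
  set Asub : Matrix (Fin m) (Fin m) ℂ :=
    Matrix.of (fun k l => g (Sum.inr (Sum.inl k)) (Sum.inr (Sum.inl l))) with hAsub_def
  set bv : Fin m → ℂ := fun l => g (Sum.inl ()) (Sum.inr (Sum.inl l)) with hbv_def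
  set wv : Fin m → ℂ := fun j => g (Sum.inr (Sum.inl j)) (Sum.inr (Sum.inr ())) with hwv_def
  set uv : Fin m → ℂ := fun l => -((starRingEnd ℂ) (bv l)) * hN with huv_def
  have hA' : Asubᴴ * Asub = 1 := by
    ext k l
    simpa [Matrix.mul_apply, Matrix.conjTranspose_apply, Matrix.one_apply, hAsub_def] using F3 k l
  have hAA : Asub * Asubᴴ = 1 := mul_eq_one_comm.mp hA'
  have hu : Asubᴴ.mulVec wv = uv := by
    funext l
    simpa [Matrix.mulVec, dotProduct, Matrix.conjTranspose_apply, huv_def, hbv_def,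
      hwv_def, hAsub_def, neg_mul] using F4 l
  have hw_eq : wv = Asub.mulVec uv := by
    rw [← hu, Matrix.mulVec_mulVec, hAA, Matrix.one_mulVec]
  have hrr : (r : ℂ) * ((r : ℂ))⁻¹ = 1 := mul_inv_cancel₀ hrC
  have hnorm : dotProduct (star wv) wv = dotProduct (star uv) uv := by
    conv_lhs => rw [hw_eq]
    rw [Matrix.star_mulVec, ← Matrix.dotProduct_mulVec, Matrix.mulVec_mulVec, hA',
      Matrix.one_mulVec]
  -- τ, t, U
  set τv : Fin m → ℂ := fun l => -((starRingEnd ℂ) (bv l)) * μ / (r : ℂ) with hτv_def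
  set tval : ℝ := 2 * (d / a).im with ht_def
  set Umat : Matrix (Fin m) (Fin m) ℂ :=
    Matrix.of (fun k l => (starRingEnd ℂ) μ * Asub k l) with hU_def
  have huτ : uv = τv := by
    funext l
    rw [huv_def, hτv_def]
    simp only [hNval]
    ring
  have hUunit : Umat ∈ Matrix.unitaryGroup (Fin m) ℂ := by
    rw [Matrix.mem_unitaryGroup_iff']
    have hstar : star Umat * Umat = Asubᴴ * Asub := by
      ext k l
      rw [Matrix.mul_apply, Matrix.mul_apply]
      apply Finset.sum_congr rfl
      intro j _
      show star (Umat j k) * Umat j l = star (Asub j k) * Asub j l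
      simp only [hU_def, Matrix.of_apply, ← starRingEnd_apply, _root_.map_mul,
        Complex.conj_conj]
      linear_combination ((starRingEnd ℂ) (Asub j k) * Asub j l) * hμμ
    rw [hstar, hA']
  -- sum of normSq τ equals ∑ conj w * w
  have hsum1 : ∑ j, (starRingEnd ℂ) (wv j) * wv j = ∑ l, (starRingEnd ℂ) (uv l) * uv l := by
    have h := hnorm
    simp only [dotProduct, Pi.star_apply] at h
    exact h
  have hT : ((∑ k, Complex.normSq (τv k) : ℝ) : ℂ)
      = ∑ j, (starRingEnd ℂ) (wv j) * wv j := by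
    rw [hsum1, huτ]
    push_cast
    exact Finset.sum_congr rfl fun k _ => (Complex.normSq_eq_conj_mul_self (z := τv k))
  -- the (1, n+1) entry
  have hz2re : ((2 * (d / a).re : ℝ) : ℂ) = -((∑ k, Complex.normSq (τv k) : ℝ) : ℂ) := by
    have hcd : (starRingEnd ℂ) d * hN = (starRingEnd ℂ) (d / a) := by
      rw [map_div₀]
      field_simp
      linear_combination (starRingEnd ℂ) d * F1
    have hdc : (starRingEnd ℂ) hN * d = d / a := by
      have F1' : a * (starRingEnd ℂ) hN = 1 := by
        have := congrArg (starRingEnd ℂ) F1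
        simpa using this
      field_simp
      linear_combination d * F1'
    have h5 := F5
    rw [hcd, hdc, ← hT] at h5
    have := Complex.add_conj (d / a)
    -- d/a + conj(d/a) = 2 re
    rw [show ((2 * (d / a).re : ℝ) : ℂ) = (d/a) + (starRingEnd ℂ) (d/a) from by
      rw [Complex.add_conj]]
    linear_combination h5
  have hd_entry : d = a * ((-((∑ k, Complex.normSq (τv k) : ℝ) : ℂ)
      + (tval : ℂ) * Complex.I) / 2) := by
    have hz : (d / a) = ((-((∑ k, Complex.normSq (τv k) : ℝ) : ℂ)
        + (tval : ℂ) * Complex.I) / 2) := by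
      have hri := Complex.re_add_im (d / a)
      have hz2re' := hz2re
      push_cast at hz2re'
      rw [ht_def]
      push_cast
      linear_combination (-1 : ℂ) * hri + (1/2) * hz2re'
    rw [← hz]
    field_simp
  -- entries of g in terms of parameters
  have hb_entry : ∀ l, bv l = -(μ * (r : ℂ) * (starRingEnd ℂ) (τv l)) := by
    intro l
    rw [hτv_def]
    simp only [map_div₀, _root_.map_mul, map_neg, Complex.conj_conj, Complex.conj_ofReal]
    rw [div_eq_mul_inv]
    linear_combination (-(bv l * (r : ℂ) * ((r : ℂ))⁻¹)) * hμμ - (bv l) * hrr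
  have hA_entry : ∀ k l, Asub k l = μ * Umat k l := by
    intro k l
    simp only [hU_def, Matrix.of_apply]
    linear_combination (-(Asub k l)) * hμμ
  have hw_entry : ∀ k, wv k = μ * ∑ l, Umat k l * τv l := by
    intro k
    have h0 : wv k = ∑ l, Asub k l * τv l := by
      rw [hw_eq, huτ]
      simp [Matrix.mulVec, dotProduct]
    rw [h0, Finset.mul_sum]
    apply Finset.sum_congr rfl
    intro l _
    simp only [hU_def, Matrix.of_apply]
    linear_combination (-(Asub k l * τv l)) * hμμ
  -- existence
  refine ⟨⟨μ, r, Umat, τv, tval⟩, ⟨hμabs, hr, hUunit, ?_⟩, ?_⟩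
  · rw [prod_eq]
    ext i j
    rcases i with _ | k | _ <;> rcases j with _ | l | _ <;>
      simp only [Mblk, Matrix.of_apply]
    · exact haμ
    · exact hb_entry l
    · rw [← haμ]; exact hd_entry
    · exact hz1 k
    · exact hA_entry k l
    · exact hw_entry k
    · exact hz2
    · exact hf l
    · exact hNval
  -- uniqueness
  · rintro ⟨μ', r', U', τ', t'⟩ ⟨hq1, hq2, hq3, hq4⟩
    rw [prod_eq] at hq4
    have ea : a = μ' * (r' : ℂ) := by
      simpa [Mblk] using congrFun (congrFun hq4 (Sum.inl ())) (Sum.inl ())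
    have hr'eq : r' = r := by
      rw [hr_def, ea, norm_mul, hq1, one_mul, Complex.norm_real, Real.norm_eq_abs, abs_of_pos hq2]
    have hμ'eq : μ' = μ := by
      rw [hμ_def, ea, hr'eq]
      field_simp
    have hμ'μ : μ' * (starRingEnd ℂ) μ' = 1 := by rw [hμ'eq]; exact hμμ
    have hU'eq : U' = Umat := by
      ext k l
      have eA : Asub k l = μ' * U' k l := by
        simpa [Mblk, hAsub_def] using congrFun (congrFun hq4 (Sum.inr (Sum.inl k))) (Sum.inr (Sum.inl l))
      rw [hμ'eq] at eA
      simp only [hU_def, Matrix.of_apply]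
      rw [eA]
      linear_combination (-(U' k l)) * hμμ
    have hτ'eq : τ' = τv := by
      funext l
      have eb : bv l = -(μ' * (r' : ℂ) * (starRingEnd ℂ) (τ' l)) := by
        simpa [Mblk] using congrFun (congrFun hq4 (Sum.inl ())) (Sum.inr (Sum.inl l))
      rw [hμ'eq, hr'eq] at eb
      rw [hτv_def]
      simp only [eb]
      simp only [map_neg, _root_.map_mul, Complex.conj_conj, Complex.conj_ofReal]
      rw [div_eq_mul_inv]
      linear_combination (-(τ' l * (r : ℂ) * ((r : ℂ))⁻¹)) * hμμ - (τ' l) * hrr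
    have ht'eq : t' = tval := by
      have ed : d = μ' * (r' : ℂ) * ((-((∑ k, Complex.normSq (τ' k) : ℝ) : ℂ)
          + (t' : ℂ) * Complex.I) / 2) := by
        simpa [Mblk] using congrFun (congrFun hq4 (Sum.inl ())) (Sum.inr (Sum.inr ()))
      rw [hμ'eq, hr'eq, hτ'eq, ← haμ] at ed
      have := mul_left_cancel₀ ha (ed.symm.trans hd_entry)
      have him := congrArg Complex.im this
      simp only [Complex.div_im, Complex.add_im, Complex.neg_im, Complex.ofReal_im,
        Complex.mul_im, Complex.I_im, Complex.ofReal_re, Complex.I_re] at him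
      field_simp at him
      norm_num at him
      linarith [him]
    simp only [Prod.mk.injEq]
    exact ⟨hμ'eq, hr'eq, hU'eq, hτ'eq, ht'eq⟩

theorem stabilizer_of_infinity_decomposition {m : ℕ} (hm : 1 ≤ m)
    (g : Matrix (Idx m) (Idx m) ℂ) (hg : InU2 g)
    (hfix : ∃ c : ℂ, g.mulVec (e1 m) = c • e1 m) :
    ∃! p : ℂ × ℝ × Matrix (Fin m) (Fin m) ℂ × (Fin m → ℂ) × ℝ,
      ‖p.1‖ = 1 ∧ 0 < p.2.1 ∧ p.2.2.1 ∈ Matrix.unitaryGroup (Fin m) ℂ ∧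
        g = p.1 • (Dil p.2.1 * RU p.2.2.1 * Htr p.2.2.2.1 p.2.2.2.2) := by
  obtain ⟨hunit, h2⟩ := hg
  obtain ⟨c, hc⟩ := hfix
  have hz1 : ∀ k, g (Sum.inr (Sum.inl k)) (Sum.inl ()) = 0 := by
    intro k
    have := congrFun hc (Sum.inr (Sum.inl k))
    simpa [Matrix.mulVec, dotProduct, e1, Fintype.sum_sum_type] using this
  have hz2 : g (Sum.inr (Sum.inr ())) (Sum.inl ()) = 0 := by
    have := congrFun hc (Sum.inr (Sum.inr ()))
    simpa [Matrix.mulVec, dotProduct, e1, Fintype.sum_sum_type] using this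
  exact aux_decomp g hz1 hz2 (key_of g h2)
end

section
/- Centralizer of a vertical translation: let t ∈ ℝ, t ≠ 0. An element S ∈ U(n,1) commutes with the vertical Heisenberg translation T_{(0,t)} if and only if there exist μ ∈ ℂ with |μ| = 1, a unitary V ∈ U(n−1), σ ∈ ℂ^{n−1} and s ∈ ℝ such that S = μ · R_V · T_{(σ,s)}. -/
open Matrix Complex

lemma Jsq (m : ℕ) : Jm m * Jm m = 1 := by
  ext i j
  rcases i with _ | k | _ <;> rcases j with _ | l | _ <;>
    simp [Jm, Matrix.mul_apply, Fintype.sum_sum_type, Matrix.one_apply]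

lemma HtrHtr {m : ℕ} (σ : Fin m → ℂ) (s t : ℝ) :
    Htr σ s * Htr (0 : Fin m → ℂ) t = Htr σ (s + t) := by
  ext i j
  rcases i with _ | k | _ <;> rcases j with _ | l | _ <;>
    simp [Htr, Matrix.mul_apply, Fintype.sum_sum_type] <;> push_cast <;> ring

lemma HtrHtr2 {m : ℕ} (σ : Fin m → ℂ) (s t : ℝ) :
    Htr (0 : Fin m → ℂ) t * Htr σ s = Htr σ (s + t) := by
  ext i j
  rcases i with _ | k | _ <;> rcases j with _ | l | _ <;>
    simp [Htr, Matrix.mul_apply, Fintype.sum_sum_type] <;> push_cast <;> ring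

lemma RUHtr {m : ℕ} (V : Matrix (Fin m) (Fin m) ℂ) (t : ℝ) :
    RU V * Htr (0 : Fin m → ℂ) t = Htr (0 : Fin m → ℂ) t * RU V := by
  ext i j
  rcases i with _ | k | _ <;> rcases j with _ | l | _ <;>
    simp [RU, Htr, Matrix.mul_apply, Fintype.sum_sum_type]

theorem centralizer_of_vertical_translation {m : ℕ} (hm : 1 ≤ m) (t : ℝ) (ht : t ≠ 0)
    (S : Matrix (Idx m) (Idx m) ℂ) (hS : InU2 S) :
    S * Htr (0 : Fin m → ℂ) t = Htr (0 : Fin m → ℂ) t * S ↔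
      ∃ (μ : ℂ) (V : Matrix (Fin m) (Fin m) ℂ) (σ : Fin m → ℂ) (s : ℝ),
        ‖μ‖ = 1 ∧ V ∈ Matrix.unitaryGroup (Fin m) ℂ ∧
          S = μ • (RU V * Htr σ s) := by
  constructor
  · intro hcomm
    -- S * Jm * Sᴴ = Jm
    have hJ : S * Jm m * Sᴴ = Jm m := by
      have h2 := hS.2
      have h3 : (Jm m * Sᴴ * Jm m) * S = 1 := by
        calc (Jm m * Sᴴ * Jm m) * S = Jm m * (Sᴴ * Jm m * S) := by
              simp only [mul_assoc]
        _ = 1 := by rw [h2, Jsq]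
      have h4 : S * (Jm m * Sᴴ * Jm m) = 1 := mul_eq_one_comm.mp h3
      calc S * Jm m * Sᴴ = S * Jm m * Sᴴ * (Jm m * Jm m) := by rw [Jsq, mul_one]
      _ = (S * (Jm m * Sᴴ * Jm m)) * Jm m := by simp only [mul_assoc]
      _ = Jm m := by rw [h4, one_mul]
    -- entry facts from commuting
    have hc1 : ∀ k, S (Sum.inr (Sum.inl k)) (Sum.inl ()) = 0 := by
      intro k
      have h := congrFun (congrFun hcomm (Sum.inr (Sum.inl k))) (Sum.inr (Sum.inr ()))
      simp [Htr, Matrix.mul_apply, Fintype.sum_sum_type] at h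
      exact h.resolve_right ht
    have hc2 : S (Sum.inr (Sum.inr ())) (Sum.inl ()) = 0 := by
      have h := congrFun (congrFun hcomm (Sum.inr (Sum.inr ()))) (Sum.inr (Sum.inr ()))
      simp [Htr, Matrix.mul_apply, Fintype.sum_sum_type] at h
      exact h.resolve_right ht
    have hc3 : ∀ l, S (Sum.inr (Sum.inr ())) (Sum.inr (Sum.inl l)) = 0 := by
      intro l
      have h := congrFun (congrFun hcomm (Sum.inl ())) (Sum.inr (Sum.inl l))
      simp [Htr, Matrix.mul_apply, Fintype.sum_sum_type] at h
      exact h.resolve_left ht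
    have hc4 : S (Sum.inl ()) (Sum.inl ()) = S (Sum.inr (Sum.inr ())) (Sum.inr (Sum.inr ())) := by
      have h := congrFun (congrFun hcomm (Sum.inl ())) (Sum.inr (Sum.inr ()))
      simp [Htr, Matrix.mul_apply, Fintype.sum_sum_type] at h
      have htne : (t : ℂ) * Complex.I / 2 ≠ 0 :=
        div_ne_zero (mul_ne_zero (Complex.ofReal_ne_zero.mpr ht) Complex.I_ne_zero) two_ne_zero
      have h2 : ((t : ℂ) * Complex.I / 2) *
          (S (Sum.inl ()) (Sum.inl ()) - S (Sum.inr (Sum.inr ())) (Sum.inr (Sum.inr ()))) = 0 := by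
        linear_combination h
      rcases mul_eq_zero.mp h2 with h3 | h3
      · exact absurd h3 htne
      · linear_combination h3
    set a := S (Sum.inl ()) (Sum.inl ()) with ha
    -- key entry facts from hJ : S Jm Sᴴ = Jm
    -- (S Jm Sᴴ) p q = S p iL * conj (S q i0) + S p i0 * conj (S q iL)
    --                 + ∑ l, S p (im l) * conj (S q (im l))
    have hJe : ∀ p q : Idx m,
        S p (Sum.inr (Sum.inr ())) * (starRingEnd ℂ) (S q (Sum.inl ()))
        + S p (Sum.inl ()) * (starRingEnd ℂ) (S q (Sum.inr (Sum.inr ())))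
        + ∑ l, S p (Sum.inr (Sum.inl l)) * (starRingEnd ℂ) (S q (Sum.inr (Sum.inl l)))
        = Jm m p q := by
      intro p q
      have h := congrFun (congrFun hJ p) q
      rw [← h]
      simp [Jm, Matrix.mul_apply, Matrix.conjTranspose_apply, Fintype.sum_sum_type,
        Finset.mul_sum, Finset.sum_mul, mul_comm]
      ring
    have haa : a * (starRingEnd ℂ) a = 1 := by
      have h := hJe (Sum.inl ()) (Sum.inr (Sum.inr ()))
      rw [hc2, ← hc4] at h
      simp [hc3, Jm] at h
      simpa using h
    have hnorma : Complex.normSq a = 1 := by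
      have := Complex.mul_conj a
      rw [haa] at this
      exact_mod_cast this.symm
    have hAA : ∀ k k', (∑ l, S (Sum.inr (Sum.inl k)) (Sum.inr (Sum.inl l)) *
        (starRingEnd ℂ) (S (Sum.inr (Sum.inl k')) (Sum.inr (Sum.inl l))))
        = if k = k' then 1 else 0 := by
      intro k k'
      have h := hJe (Sum.inr (Sum.inl k)) (Sum.inr (Sum.inl k'))
      rw [hc1 k, hc1 k'] at h
      simpa [Jm] using h
    have hd : ∀ k, S (Sum.inr (Sum.inl k)) (Sum.inr (Sum.inr ())) * (starRingEnd ℂ) a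
        + ∑ l, S (Sum.inr (Sum.inl k)) (Sum.inr (Sum.inl l)) *
          (starRingEnd ℂ) (S (Sum.inl ()) (Sum.inr (Sum.inl l))) = 0 := by
      intro k
      have h := hJe (Sum.inr (Sum.inl k)) (Sum.inl ())
      rw [hc1 k] at h
      simpa [Jm] using h
    have hcc : S (Sum.inl ()) (Sum.inr (Sum.inr ())) * (starRingEnd ℂ) a
        + a * (starRingEnd ℂ) (S (Sum.inl ()) (Sum.inr (Sum.inr ())))
        + ∑ l, S (Sum.inl ()) (Sum.inr (Sum.inl l)) *
          (starRingEnd ℂ) (S (Sum.inl ()) (Sum.inr (Sum.inl l))) = 0 := by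
      have h := hJe (Sum.inl ()) (Sum.inl ())
      simpa [Jm] using h
    set c := S (Sum.inl ()) (Sum.inr (Sum.inr ())) with hcdef
    set w := (starRingEnd ℂ) a * c with hwdef
    refine ⟨a,
      Matrix.of (fun k l => (starRingEnd ℂ) a * S (Sum.inr (Sum.inl k)) (Sum.inr (Sum.inl l))),
      fun l => -(a * (starRingEnd ℂ) (S (Sum.inl ()) (Sum.inr (Sum.inl l)))),
      2 * w.im, ?_, ?_, ?_⟩
    · rw [Complex.norm_def, hnorma, Real.sqrt_one]
    · rw [Matrix.mem_unitaryGroup_iff]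
      ext k k'
      simp only [Matrix.mul_apply, Matrix.star_apply, Matrix.of_apply, star_mul', 
        Complex.star_def, Complex.conj_conj, Matrix.one_apply]
      calc ∑ l, (starRingEnd ℂ) a * S (Sum.inr (Sum.inl k)) (Sum.inr (Sum.inl l)) *
            (a * (starRingEnd ℂ) (S (Sum.inr (Sum.inl k')) (Sum.inr (Sum.inl l))))
          = (a * (starRingEnd ℂ) a) * ∑ l, S (Sum.inr (Sum.inl k)) (Sum.inr (Sum.inl l)) *
            (starRingEnd ℂ) (S (Sum.inr (Sum.inl k')) (Sum.inr (Sum.inl l))) := by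
            rw [Finset.mul_sum]; exact Finset.sum_congr rfl fun l _ => by ring
        _ = if k = k' then 1 else 0 := by rw [hAA, haa, one_mul]
    · ext i j
      rcases i with ⟨⟨⟩⟩ | k | ⟨⟨⟩⟩ <;> rcases j with ⟨⟨⟩⟩ | l | ⟨⟨⟩⟩ <;>
        simp only [Matrix.smul_apply, Matrix.mul_apply, Matrix.of_apply, RU, Htr,
          Fintype.sum_sum_type, Finset.univ_unique, Finset.sum_const, Finset.card_singleton,
          one_smul, smul_eq_mul, PUnit.default_eq_unit] <;>
        simp only [mul_zero, zero_mul, mul_one, one_mul, add_zero, zero_add,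
          Finset.sum_const_zero, mul_ite, ite_mul, Finset.sum_ite_eq', Finset.mem_univ, if_true,
          smul_zero]
      · exact ha.symm
      · -- (i0, im l)
        simp only [map_neg, _root_.map_mul, Complex.conj_conj, neg_neg, ← mul_assoc, haa, one_mul]
      · -- (i0, iL)
        have hσ : (∑ l, Complex.normSq (-(a * (starRingEnd ℂ) (S (Sum.inl ()) (Sum.inr (Sum.inl l))))) : ℝ)
            = ∑ l, Complex.normSq (S (Sum.inl ()) (Sum.inr (Sum.inl l))) := by
          refine Finset.sum_congr rfl fun l _ => ?_
          simp [Complex.normSq_mul, hnorma]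
        rw [hσ]
        have hSig : ((∑ l, Complex.normSq (S (Sum.inl ()) (Sum.inr (Sum.inl l))) : ℝ) : ℂ)
            = -(w + (starRingEnd ℂ) w) := by
          have hs : ∑ l, S (Sum.inl ()) (Sum.inr (Sum.inl l)) *
              (starRingEnd ℂ) (S (Sum.inl ()) (Sum.inr (Sum.inl l)))
              = ((∑ l, Complex.normSq (S (Sum.inl ()) (Sum.inr (Sum.inl l))) : ℝ) : ℂ) := by
            push_cast
            exact Finset.sum_congr rfl fun l _ => Complex.mul_conj _
          rw [← hs]
          rw [hwdef]
          simp only [_root_.map_mul, Complex.conj_conj]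
          linear_combination hcc
        rw [hSig]
        have h2w : (((2 : ℝ) * w.im : ℝ) : ℂ) * Complex.I = w - (starRingEnd ℂ) w := by
          have := Complex.re_add_im w
          have h2 := Complex.conj_eq_iff_im (z := w)
          push_cast
          rw [Complex.sub_conj]
          push_cast
          ring
        rw [h2w]
        have : (-(-(w + (starRingEnd ℂ) w)) + (w - (starRingEnd ℂ) w)) / 2 = w := by ring
        rw [this, hwdef]
        linear_combination -c * haa
      · exact (hc1 k).trans (by ring)
      · linear_combination -(S (Sum.inr (Sum.inl k)) (Sum.inr (Sum.inl l))) * haa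
      · -- (im k, iL)
        have hsum : ∑ l, S (Sum.inr (Sum.inl k)) (Sum.inr (Sum.inl l)) *
            (starRingEnd ℂ) (S (Sum.inl ()) (Sum.inr (Sum.inl l)))
            = -(S (Sum.inr (Sum.inl k)) (Sum.inr (Sum.inr ())) * (starRingEnd ℂ) a) := by
          linear_combination hd k
        have hexp : ∑ x, (starRingEnd ℂ) a * S (Sum.inr (Sum.inl k)) (Sum.inr (Sum.inl x)) *
            -(a * (starRingEnd ℂ) (S (Sum.inl ()) (Sum.inr (Sum.inl x))))
            = ((starRingEnd ℂ) a * -a) * ∑ l, S (Sum.inr (Sum.inl k)) (Sum.inr (Sum.inl l)) *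
              (starRingEnd ℂ) (S (Sum.inl ()) (Sum.inr (Sum.inl l))) := by
          rw [Finset.mul_sum]; exact Finset.sum_congr rfl fun l _ => by ring
        rw [hexp, hsum]
        linear_combination -(S (Sum.inr (Sum.inl k)) (Sum.inr (Sum.inr ())) * (a * (starRingEnd ℂ) a + 1)) * haa
      · exact hc2.trans (by ring)
      · exact (hc3 l).trans (by ring)
      · exact hc4.symm.trans (by ring)
  · rintro ⟨μ, V, σ, s, hμ, hV, rfl⟩
    rw [Matrix.smul_mul, Matrix.mul_smul]
    congr 1
    rw [mul_assoc, HtrHtr, ← HtrHtr2, ← mul_assoc, RUHtr, mul_assoc]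
end

section
/- Centralizer of a non-vertical translation: let τ ∈ ℂ^{n−1}, τ ≠ 0, and t ∈ ℝ. An element S ∈ U(n,1) commutes with the non-vertical Heisenberg translation T_{(τ,t)} if and only if there exist μ ∈ ℂ with |μ| = 1, a unitary V ∈ U(n−1) with Vτ = τ, σ ∈ ℂ^{n−1} with Im(τᴴσ) = 0, and s ∈ ℝ, such that S = μ · R_V · T_{(σ,s)}. -/
open Matrix Complex

private lemma mulIdx {m : ℕ} (M N : Matrix (Idx m) (Idx m) ℂ) (i j : Idx m) :
    (M * N) i j =
      M i (Sum.inl ()) * N (Sum.inl ()) j +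
        (∑ k : Fin m, M i (Sum.inr (Sum.inl k)) * N (Sum.inr (Sum.inl k)) j) +
        M i (Sum.inr (Sum.inr ())) * N (Sum.inr (Sum.inr ())) j := by
  rw [Matrix.mul_apply]
  simp only [Fintype.sum_sum_type, Fintype.sum_unique]
  exact (add_assoc _ _ _).symm

noncomputable def RT {m : ℕ} (V : Matrix (Fin m) (Fin m) ℂ) (σ : Fin m → ℂ) (s : ℝ) :
    Matrix (Idx m) (Idx m) ℂ :=
  Matrix.of fun i j =>
    match i, j with
    | Sum.inl _, Sum.inl _ => 1
    | Sum.inl _, Sum.inr (Sum.inl l) => -((starRingEnd ℂ) (σ l))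
    | Sum.inl _, Sum.inr (Sum.inr _) =>
        (-(((∑ k, Complex.normSq (σ k) : ℝ)) : ℂ) + (s : ℂ) * Complex.I) / 2
    | Sum.inr (Sum.inl k), Sum.inr (Sum.inl l) => V k l
    | Sum.inr (Sum.inl k), Sum.inr (Sum.inr _) => V.mulVec σ k
    | Sum.inr (Sum.inr _), Sum.inr (Sum.inr _) => 1
    | _, _ => 0

private lemma RU_mul_Htr_s16 {m : ℕ} (V : Matrix (Fin m) (Fin m) ℂ) (σ : Fin m → ℂ) (s : ℝ) :
    RU V * Htr σ s = RT V σ s := by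
  ext i j
  rcases i with ⟨⟩ | k | ⟨⟩ <;> rcases j with ⟨⟩ | l | ⟨⟩ <;>
    simp [mulIdx, RU, Htr, RT, Matrix.mulVec, dotProduct]

private lemma Jm_mul {m : ℕ} (S : Matrix (Idx m) (Idx m) ℂ) :
    Jm m * S = Matrix.of fun i j =>
      match i with
      | Sum.inl _ => S (Sum.inr (Sum.inr ())) j
      | Sum.inr (Sum.inl k) => S (Sum.inr (Sum.inl k)) j
      | Sum.inr (Sum.inr _) => S (Sum.inl ()) j := by
  ext i j
  rcases i with ⟨⟩ | k | ⟨⟩ <;>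
    simp [mulIdx, Jm]

private lemma hermApply {m : ℕ} (S : Matrix (Idx m) (Idx m) ℂ) (i j : Idx m) :
    (Sᴴ * Jm m * S) i j =
      (starRingEnd ℂ) (S (Sum.inl ()) i) * S (Sum.inr (Sum.inr ())) j +
        (∑ k : Fin m, (starRingEnd ℂ) (S (Sum.inr (Sum.inl k)) i) * S (Sum.inr (Sum.inl k)) j) +
        (starRingEnd ℂ) (S (Sum.inr (Sum.inr ())) i) * S (Sum.inl ()) j := by
  rw [Matrix.mul_assoc, Jm_mul, mulIdx]
  simp [Matrix.conjTranspose_apply]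

set_option maxHeartbeats 1600000

theorem centralizer_of_nonvertical_translation {m : ℕ} (hm : 1 ≤ m)
    (τ : Fin m → ℂ) (hτ : τ ≠ 0) (t : ℝ)
    (S : Matrix (Idx m) (Idx m) ℂ) (hS : InU2 S) :
    S * Htr τ t = Htr τ t * S ↔
      ∃ (μ : ℂ) (V : Matrix (Fin m) (Fin m) ℂ) (σ : Fin m → ℂ) (s : ℝ),
        ‖μ‖ = 1 ∧ V ∈ Matrix.unitaryGroup (Fin m) ℂ ∧ V.mulVec τ = τ ∧
          (dotc τ σ).im = 0 ∧ S = μ • (RU V * Htr σ s) := by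
  constructor
  · intro hc
    obtain ⟨-, hJ⟩ := hS
    have hcE : ∀ i j, (S * Htr τ t) i j = (Htr τ t * S) i j := fun i j => by rw [hc]
    have hJE : ∀ i j, (Sᴴ * Jm m * S) i j = Jm m i j := fun i j => by rw [hJ]
    obtain ⟨l0, hl0⟩ : ∃ l, τ l ≠ 0 := by
      by_contra h; push_neg at h; exact hτ (funext h)
    have hnormC : ∀ (x : Fin m → ℂ), ((∑ k, Complex.normSq (x k) : ℝ) : ℂ)
        = ∑ k, (starRingEnd ℂ) (x k) * x k := fun x => by
      push_cast
      exact Finset.sum_congr rfl fun k _ => Complex.normSq_eq_conj_mul_self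
    have hT2ne : (∑ k, (starRingEnd ℂ) (τ k) * τ k) ≠ 0 := by
      rw [← hnormC]
      exact Complex.ofReal_ne_zero.mpr (ne_of_gt (Finset.sum_pos'
        (fun k _ => Complex.normSq_nonneg _) ⟨l0, Finset.mem_univ _, Complex.normSq_pos.2 hl0⟩))
    -- g = 0
    have hg : S (Sum.inr (Sum.inr ())) (Sum.inl ()) = 0 := by
      have h := hcE (Sum.inr (Sum.inl l0)) (Sum.inl ())
      simp [mulIdx, Htr] at h
      exact h.resolve_left hl0
    -- sum cτ f = 0
    have Ef : ∑ k, (starRingEnd ℂ) (τ k) * S (Sum.inr (Sum.inl k)) (Sum.inl ()) = 0 := by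
      have h := hcE (Sum.inl ()) (Sum.inl ())
      simp [mulIdx, Htr, hg] at h
      linear_combination h
    -- E5
    have E5 : ∀ k l, τ k * S (Sum.inr (Sum.inr ())) (Sum.inr (Sum.inl l))
        = -(S (Sum.inr (Sum.inl k)) (Sum.inl ()) * (starRingEnd ℂ) (τ l)) := by
      intro k l
      have h := hcE (Sum.inr (Sum.inl k)) (Sum.inr (Sum.inl l))
      simp [mulIdx, Htr] at h
      linear_combination -h
    -- h = 0
    have hh : ∀ l, S (Sum.inr (Sum.inr ())) (Sum.inr (Sum.inl l)) = 0 := by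
      intro l
      have h1 : (∑ k, (starRingEnd ℂ) (τ k) * τ k) * S (Sum.inr (Sum.inr ())) (Sum.inr (Sum.inl l))
          = (∑ k, (starRingEnd ℂ) (τ k) * S (Sum.inr (Sum.inl k)) (Sum.inl ()))
              * (-(starRingEnd ℂ) (τ l)) := by
        rw [Finset.sum_mul, Finset.sum_mul]
        refine Finset.sum_congr rfl fun k _ => ?_
        linear_combination (starRingEnd ℂ) (τ k) * E5 k l
      rw [Ef, zero_mul] at h1
      exact (mul_eq_zero.mp h1).resolve_left hT2ne
    -- f = 0
    have hf : ∀ k, S (Sum.inr (Sum.inl k)) (Sum.inl ()) = 0 := by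
      intro k
      have h := E5 k l0
      rw [hh l0, mul_zero] at h
      have h2 : S (Sum.inr (Sum.inl k)) (Sum.inl ()) * (starRingEnd ℂ) (τ l0) = 0 := by
        linear_combination h
      rcases mul_eq_zero.mp h2 with h3 | h3
      · exact h3
      · exact absurd (by simpa using congrArg (starRingEnd ℂ) h3) hl0
    -- τᴴ A = a τᴴ
    have hτA : ∀ l, ∑ j, (starRingEnd ℂ) (τ j) * S (Sum.inr (Sum.inl j)) (Sum.inr (Sum.inl l))
        = S (Sum.inl ()) (Sum.inl ()) * (starRingEnd ℂ) (τ l) := by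
      intro l
      have h := hcE (Sum.inl ()) (Sum.inr (Sum.inl l))
      simp [mulIdx, Htr, hh] at h
      linear_combination h
    -- A τ = d τ
    have hAτ : ∀ k, ∑ j, S (Sum.inr (Sum.inl k)) (Sum.inr (Sum.inl j)) * τ j
        = τ k * S (Sum.inr (Sum.inr ())) (Sum.inr (Sum.inr ())) := by
      intro k
      have h := hcE (Sum.inr (Sum.inl k)) (Sum.inr (Sum.inr ()))
      simp [mulIdx, Htr, hf] at h
      linear_combination h
    -- d = a
    have had : S (Sum.inr (Sum.inr ())) (Sum.inr (Sum.inr ())) = S (Sum.inl ()) (Sum.inl ()) := by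
      have h1 : ∑ l, (starRingEnd ℂ) (τ l) * (∑ j, S (Sum.inr (Sum.inl l)) (Sum.inr (Sum.inl j)) * τ j)
          = (∑ l, (starRingEnd ℂ) (τ l) * τ l) * S (Sum.inr (Sum.inr ())) (Sum.inr (Sum.inr ())) := by
        rw [Finset.sum_mul]
        refine Finset.sum_congr rfl fun l _ => ?_
        rw [hAτ l]; ring
      have h2 : ∑ l, (starRingEnd ℂ) (τ l) * (∑ j, S (Sum.inr (Sum.inl l)) (Sum.inr (Sum.inl j)) * τ j)
          = (∑ l, (starRingEnd ℂ) (τ l) * τ l) * S (Sum.inl ()) (Sum.inl ()) := by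
        simp_rw [Finset.mul_sum]
        rw [Finset.sum_comm]
        rw [Finset.sum_mul]
        refine Finset.sum_congr rfl fun j _ => ?_
        have h3 : ∑ l, (starRingEnd ℂ) (τ l) * (S (Sum.inr (Sum.inl l)) (Sum.inr (Sum.inl j)) * τ j)
            = (∑ l, (starRingEnd ℂ) (τ l) * S (Sum.inr (Sum.inl l)) (Sum.inr (Sum.inl j))) * τ j := by
          rw [Finset.sum_mul]; exact Finset.sum_congr rfl fun l _ => by ring
        rw [h3, hτA j]; ring
      exact mul_left_cancel₀ hT2ne (h1.symm.trans h2)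
    have hAτ' : ∀ k, ∑ j, S (Sum.inr (Sum.inl k)) (Sum.inr (Sum.inl j)) * τ j
        = τ k * S (Sum.inl ()) (Sum.inl ()) := fun k => by rw [hAτ k, had]
    -- E3 : Σ ρ τ = - Σ cτ w
    have hE3 : ∑ j, S (Sum.inl ()) (Sum.inr (Sum.inl j)) * τ j
        = -∑ j, (starRingEnd ℂ) (τ j) * S (Sum.inr (Sum.inl j)) (Sum.inr (Sum.inr ())) := by
      have h := hcE (Sum.inl ()) (Sum.inr (Sum.inr ()))
      simp [mulIdx, Htr, had] at h
      linear_combination h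
    -- unitarity equations
    have haa : (starRingEnd ℂ) (S (Sum.inl ()) (Sum.inl ())) * S (Sum.inl ()) (Sum.inl ()) = 1 := by
      have h := hJE (Sum.inl ()) (Sum.inr (Sum.inr ()))
      rw [hermApply] at h
      simp [Jm, hf, hg, had] at h
      linear_combination h
    have hane : S (Sum.inl ()) (Sum.inl ()) ≠ 0 := by
      intro h0; rw [h0] at haa; simp at haa
    have hAA : ∀ k l, ∑ j, (starRingEnd ℂ) (S (Sum.inr (Sum.inl j)) (Sum.inr (Sum.inl k)))
        * S (Sum.inr (Sum.inl j)) (Sum.inr (Sum.inl l)) = if k = l then 1 else 0 := by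
      intro k l
      have h := hJE (Sum.inr (Sum.inl k)) (Sum.inr (Sum.inl l))
      rw [hermApply] at h
      simp [Jm, hh] at h
      rw [← h]
    have hA1 : (Matrix.of fun k l => S (Sum.inr (Sum.inl k)) (Sum.inr (Sum.inl l)))ᴴ
        * (Matrix.of fun k l => S (Sum.inr (Sum.inl k)) (Sum.inr (Sum.inl l))) = 1 := by
      ext k l
      rw [Matrix.mul_apply]
      simpa [Matrix.conjTranspose_apply, Matrix.one_apply] using hAA k l
    have hA2 := mul_eq_one_comm.mp hA1
    have hAA2 : ∀ k i, ∑ l, S (Sum.inr (Sum.inl k)) (Sum.inr (Sum.inl l))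
        * (starRingEnd ℂ) (S (Sum.inr (Sum.inl i)) (Sum.inr (Sum.inl l))) = if k = i then 1 else 0 := by
      intro k i
      have h := congrFun (congrFun hA2 k) i
      simpa [Matrix.mul_apply, Matrix.conjTranspose_apply, Matrix.one_apply] using h
    have U3 : ∀ k, (starRingEnd ℂ) (S (Sum.inl ()) (Sum.inr (Sum.inl k))) * S (Sum.inl ()) (Sum.inl ())
        + ∑ j, (starRingEnd ℂ) (S (Sum.inr (Sum.inl j)) (Sum.inr (Sum.inl k)))
            * S (Sum.inr (Sum.inl j)) (Sum.inr (Sum.inr ())) = 0 := by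
      intro k
      have h := hJE (Sum.inr (Sum.inl k)) (Sum.inr (Sum.inr ()))
      rw [hermApply] at h
      simp [Jm, hh, had] at h
      linear_combination h
    have U4 : (starRingEnd ℂ) (S (Sum.inl ()) (Sum.inr (Sum.inr ()))) * S (Sum.inl ()) (Sum.inl ())
        + (∑ j, (starRingEnd ℂ) (S (Sum.inr (Sum.inl j)) (Sum.inr (Sum.inr ())))
            * S (Sum.inr (Sum.inl j)) (Sum.inr (Sum.inr ())))
        + (starRingEnd ℂ) (S (Sum.inl ()) (Sum.inl ())) * S (Sum.inl ()) (Sum.inr (Sum.inr ())) = 0 := by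
      have h := hJE (Sum.inr (Sum.inr ())) (Sum.inr (Sum.inr ()))
      rw [hermApply] at h
      simp [Jm, had] at h
      linear_combination h
    -- row vector ρ in terms of σ
    have hρ : ∀ k, S (Sum.inl ()) (Sum.inr (Sum.inl k))
        = -(S (Sum.inl ()) (Sum.inl ()) * ∑ j, S (Sum.inr (Sum.inl j)) (Sum.inr (Sum.inl k))
            * (starRingEnd ℂ) (S (Sum.inr (Sum.inl j)) (Sum.inr (Sum.inr ())))) := by
      intro k
      have h1 := congrArg (starRingEnd ℂ) (U3 k)
      simp only [map_add, _root_.map_mul, map_sum, Complex.conj_conj, map_zero] at h1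
      linear_combination S (Sum.inl ()) (Sum.inl ()) * h1
        - S (Sum.inl ()) (Sum.inr (Sum.inl k)) * haa
    -- w = A σ
    have hw : ∀ k, ∑ l, S (Sum.inr (Sum.inl k)) (Sum.inr (Sum.inl l))
        * (∑ j, (starRingEnd ℂ) (S (Sum.inr (Sum.inl j)) (Sum.inr (Sum.inl l)))
            * S (Sum.inr (Sum.inl j)) (Sum.inr (Sum.inr ())))
        = S (Sum.inr (Sum.inl k)) (Sum.inr (Sum.inr ())) := by
      intro k
      calc ∑ l, S (Sum.inr (Sum.inl k)) (Sum.inr (Sum.inl l))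
            * (∑ j, (starRingEnd ℂ) (S (Sum.inr (Sum.inl j)) (Sum.inr (Sum.inl l)))
                * S (Sum.inr (Sum.inl j)) (Sum.inr (Sum.inr ())))
          = ∑ l, ∑ j, (S (Sum.inr (Sum.inl k)) (Sum.inr (Sum.inl l))
              * (starRingEnd ℂ) (S (Sum.inr (Sum.inl j)) (Sum.inr (Sum.inl l))))
              * S (Sum.inr (Sum.inl j)) (Sum.inr (Sum.inr ())) := by
            refine Finset.sum_congr rfl fun l _ => ?_
            rw [Finset.mul_sum]
            exact Finset.sum_congr rfl fun j _ => by ring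
        _ = ∑ j, (∑ l, S (Sum.inr (Sum.inl k)) (Sum.inr (Sum.inl l))
              * (starRingEnd ℂ) (S (Sum.inr (Sum.inl j)) (Sum.inr (Sum.inl l))))
              * S (Sum.inr (Sum.inl j)) (Sum.inr (Sum.inr ())) := by
            rw [Finset.sum_comm]
            exact Finset.sum_congr rfl fun j _ => (Finset.sum_mul _ _ _).symm
        _ = S (Sum.inr (Sum.inl k)) (Sum.inr (Sum.inr ())) := by
            simp_rw [hAA2]
            simp
    -- Im (τᴴ σ) = 0
    have e1 : S (Sum.inl ()) (Sum.inl ()) * ∑ j, τ j * (∑ l, S (Sum.inr (Sum.inl l)) (Sum.inr (Sum.inl j))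
        * (starRingEnd ℂ) (S (Sum.inr (Sum.inl l)) (Sum.inr (Sum.inr ()))))
        = -∑ j, S (Sum.inl ()) (Sum.inr (Sum.inl j)) * τ j := by
      rw [Finset.mul_sum, ← Finset.sum_neg_distrib]
      refine Finset.sum_congr rfl fun j _ => ?_
      rw [hρ j]; ring
    have e2 : ∑ j, (starRingEnd ℂ) (τ j) * S (Sum.inr (Sum.inl j)) (Sum.inr (Sum.inr ()))
        = S (Sum.inl ()) (Sum.inl ()) * ∑ l, (starRingEnd ℂ) (τ l)
            * (∑ j, (starRingEnd ℂ) (S (Sum.inr (Sum.inl j)) (Sum.inr (Sum.inl l)))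
                * S (Sum.inr (Sum.inl j)) (Sum.inr (Sum.inr ()))) := by
      have e2a : ∀ j, (starRingEnd ℂ) (τ j) * S (Sum.inr (Sum.inl j)) (Sum.inr (Sum.inr ()))
          = ∑ l, ((starRingEnd ℂ) (τ j) * S (Sum.inr (Sum.inl j)) (Sum.inr (Sum.inl l)))
              * (∑ i, (starRingEnd ℂ) (S (Sum.inr (Sum.inl i)) (Sum.inr (Sum.inl l)))
                  * S (Sum.inr (Sum.inl i)) (Sum.inr (Sum.inr ()))) := by
        intro j
        rw [← hw j, Finset.mul_sum]
        exact Finset.sum_congr rfl fun l _ => by ring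
      simp_rw [e2a]
      rw [Finset.sum_comm, Finset.mul_sum]
      refine Finset.sum_congr rfl fun l _ => ?_
      rw [← Finset.sum_mul, hτA l]
      ring
    have hDX : (starRingEnd ℂ) (∑ k, (starRingEnd ℂ) (τ k)
        * (∑ j, (starRingEnd ℂ) (S (Sum.inr (Sum.inl j)) (Sum.inr (Sum.inl k)))
            * S (Sum.inr (Sum.inl j)) (Sum.inr (Sum.inr ()))))
        = ∑ j, τ j * (∑ l, S (Sum.inr (Sum.inl l)) (Sum.inr (Sum.inl j))
            * (starRingEnd ℂ) (S (Sum.inr (Sum.inl l)) (Sum.inr (Sum.inr ())))) := by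
      simp only [map_sum, _root_.map_mul, Complex.conj_conj]
    have e4 : (starRingEnd ℂ) (∑ k, (starRingEnd ℂ) (τ k)
        * (∑ j, (starRingEnd ℂ) (S (Sum.inr (Sum.inl j)) (Sum.inr (Sum.inl k)))
            * S (Sum.inr (Sum.inl j)) (Sum.inr (Sum.inr ()))))
        = ∑ k, (starRingEnd ℂ) (τ k)
        * (∑ j, (starRingEnd ℂ) (S (Sum.inr (Sum.inl j)) (Sum.inr (Sum.inl k)))
            * S (Sum.inr (Sum.inl j)) (Sum.inr (Sum.inr ()))) := by
      refine mul_left_cancel₀ hane ?_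
      rw [hDX, e1, hE3, neg_neg, e2]
    have hcσ : ∀ k, (starRingEnd ℂ) (∑ j, (starRingEnd ℂ) (S (Sum.inr (Sum.inl j)) (Sum.inr (Sum.inl k)))
        * S (Sum.inr (Sum.inl j)) (Sum.inr (Sum.inr ())))
        = ∑ j, S (Sum.inr (Sum.inl j)) (Sum.inr (Sum.inl k))
            * (starRingEnd ℂ) (S (Sum.inr (Sum.inl j)) (Sum.inr (Sum.inr ()))) := by
      intro k
      simp only [map_sum, _root_.map_mul, Complex.conj_conj]
    have hσw : ∑ k, (starRingEnd ℂ) (∑ j, (starRingEnd ℂ) (S (Sum.inr (Sum.inl j)) (Sum.inr (Sum.inl k)))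
        * S (Sum.inr (Sum.inl j)) (Sum.inr (Sum.inr ())))
        * (∑ j, (starRingEnd ℂ) (S (Sum.inr (Sum.inl j)) (Sum.inr (Sum.inl k)))
            * S (Sum.inr (Sum.inl j)) (Sum.inr (Sum.inr ())))
        = ∑ j, (starRingEnd ℂ) (S (Sum.inr (Sum.inl j)) (Sum.inr (Sum.inr ())))
            * S (Sum.inr (Sum.inl j)) (Sum.inr (Sum.inr ())) := by
      calc ∑ k, (starRingEnd ℂ) (∑ j, (starRingEnd ℂ) (S (Sum.inr (Sum.inl j)) (Sum.inr (Sum.inl k)))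
            * S (Sum.inr (Sum.inl j)) (Sum.inr (Sum.inr ())))
            * (∑ j, (starRingEnd ℂ) (S (Sum.inr (Sum.inl j)) (Sum.inr (Sum.inl k)))
                * S (Sum.inr (Sum.inl j)) (Sum.inr (Sum.inr ())))
          = ∑ k, ∑ j, ∑ i, (S (Sum.inr (Sum.inl j)) (Sum.inr (Sum.inl k))
              * (starRingEnd ℂ) (S (Sum.inr (Sum.inl i)) (Sum.inr (Sum.inl k))))
              * ((starRingEnd ℂ) (S (Sum.inr (Sum.inl j)) (Sum.inr (Sum.inr ())))
                  * S (Sum.inr (Sum.inl i)) (Sum.inr (Sum.inr ()))) := by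
            refine Finset.sum_congr rfl fun k _ => ?_
            rw [hcσ k, Finset.sum_mul]
            refine Finset.sum_congr rfl fun j _ => ?_
            rw [Finset.mul_sum]
            exact Finset.sum_congr rfl fun i _ => by ring
        _ = ∑ j, ∑ i, (∑ k, S (Sum.inr (Sum.inl j)) (Sum.inr (Sum.inl k))
              * (starRingEnd ℂ) (S (Sum.inr (Sum.inl i)) (Sum.inr (Sum.inl k))))
              * ((starRingEnd ℂ) (S (Sum.inr (Sum.inl j)) (Sum.inr (Sum.inr ())))
                  * S (Sum.inr (Sum.inl i)) (Sum.inr (Sum.inr ()))) := by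
            simp_rw [Finset.sum_mul]
            rw [Finset.sum_comm]
            exact Finset.sum_congr rfl fun j _ => Finset.sum_comm
        _ = ∑ j, (starRingEnd ℂ) (S (Sum.inr (Sum.inl j)) (Sum.inr (Sum.inr ())))
            * S (Sum.inr (Sum.inl j)) (Sum.inr (Sum.inr ())) := by
            simp_rw [hAA2]
            simp
    have h5 : ((∑ k, Complex.normSq (∑ j, (starRingEnd ℂ) (S (Sum.inr (Sum.inl j)) (Sum.inr (Sum.inl k)))
        * S (Sum.inr (Sum.inl j)) (Sum.inr (Sum.inr ()))) : ℝ) : ℂ)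
        = -(((2 * (((starRingEnd ℂ) (S (Sum.inl ()) (Sum.inl ())) * S (Sum.inl ()) (Sum.inr (Sum.inr ()))).re) : ℝ) : ℂ) : ℂ) := by
      rw [hnormC, hσw]
      have h6 := Complex.add_conj ((starRingEnd ℂ) (S (Sum.inl ()) (Sum.inl ())) * S (Sum.inl ()) (Sum.inr (Sum.inr ())))
      simp only [_root_.map_mul, Complex.conj_conj] at h6
      linear_combination U4 - h6
    refine ⟨S (Sum.inl ()) (Sum.inl ()),
      Matrix.of fun k l => (starRingEnd ℂ) (S (Sum.inl ()) (Sum.inl ())) * S (Sum.inr (Sum.inl k)) (Sum.inr (Sum.inl l)),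
      fun k => ∑ j, (starRingEnd ℂ) (S (Sum.inr (Sum.inl j)) (Sum.inr (Sum.inl k))) * S (Sum.inr (Sum.inl j)) (Sum.inr (Sum.inr ())),
      2 * (((starRingEnd ℂ) (S (Sum.inl ()) (Sum.inl ())) * S (Sum.inl ()) (Sum.inr (Sum.inr ()))).im),
      ?_, ?_, ?_, ?_, ?_⟩
    · have h1 : (Complex.normSq (S (Sum.inl ()) (Sum.inl ())) : ℂ) = 1 := by
        rw [Complex.normSq_eq_conj_mul_self]; exact haa
      have h2 : Complex.normSq (S (Sum.inl ()) (Sum.inl ())) = 1 := by exact_mod_cast h1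
      rw [Complex.norm_def, h2, Real.sqrt_one]
    · rw [Matrix.mem_unitaryGroup_iff']
      ext k l
      rw [Matrix.mul_apply]
      have e : ∀ j, (star (Matrix.of fun k l => (starRingEnd ℂ) (S (Sum.inl ()) (Sum.inl ()))
            * S (Sum.inr (Sum.inl k)) (Sum.inr (Sum.inl l)))) k j
            * (Matrix.of fun k l => (starRingEnd ℂ) (S (Sum.inl ()) (Sum.inl ()))
                * S (Sum.inr (Sum.inl k)) (Sum.inr (Sum.inl l))) j l
          = ((starRingEnd ℂ) (S (Sum.inl ()) (Sum.inl ())) * S (Sum.inl ()) (Sum.inl ()))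
              * ((starRingEnd ℂ) (S (Sum.inr (Sum.inl j)) (Sum.inr (Sum.inl k)))
                  * S (Sum.inr (Sum.inl j)) (Sum.inr (Sum.inl l))) := by
        intro j
        simp only [Matrix.star_apply, Matrix.of_apply, Complex.star_def, _root_.map_mul,
          Complex.conj_conj]
        ring
      rw [Finset.sum_congr rfl fun j _ => e j, ← Finset.mul_sum, hAA k l, haa, one_mul]
      simp [Matrix.one_apply]
    · funext k
      simp only [Matrix.mulVec, dotProduct, Matrix.of_apply]
      have e : ∑ j, ((starRingEnd ℂ) (S (Sum.inl ()) (Sum.inl ())) * S (Sum.inr (Sum.inl k)) (Sum.inr (Sum.inl j))) * τ j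
          = (starRingEnd ℂ) (S (Sum.inl ()) (Sum.inl ())) * ∑ j, S (Sum.inr (Sum.inl k)) (Sum.inr (Sum.inl j)) * τ j := by
        rw [Finset.mul_sum]; exact Finset.sum_congr rfl fun j _ => by ring
      rw [e, hAτ' k]
      linear_combination τ k * haa
    · simp only [dotc]
      exact Complex.conj_eq_iff_im.mp e4
    · rw [RU_mul_Htr_s16]
      ext i j
      rcases i with u | k | u <;> (try cases u) <;> rcases j with v | l | v <;> (try cases v) <;>
        simp [RT, hf, hg, hh, had, Matrix.mulVec, dotProduct]
      · exact hρ l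
      · show S (Sum.inl ()) (Sum.inr (Sum.inr ())) = _
        have h1 : (Complex.normSq (S (Sum.inl ()) (Sum.inl ())) : ℂ) = 1 := by
          rw [Complex.normSq_eq_conj_mul_self]; exact haa
        have hn : (S (Sum.inl ()) (Sum.inl ())).re * (S (Sum.inl ()) (Sum.inl ())).re
            + (S (Sum.inl ()) (Sum.inl ())).im * (S (Sum.inl ()) (Sum.inl ())).im = 1 := by
          have h2 : Complex.normSq (S (Sum.inl ()) (Sum.inl ())) = 1 := by exact_mod_cast h1
          simpa [Complex.normSq_apply] using h2
        push_cast at h5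
        rw [h5]
        apply Complex.ext <;>
          simp [Complex.mul_re, Complex.mul_im, Complex.div_re, Complex.div_im,
            Complex.normSq_apply] <;>
          ring_nf <;>
          [linear_combination (-(S (Sum.inl ()) (Sum.inr (Sum.inr ()))).re) * hn;
           linear_combination (-(S (Sum.inl ()) (Sum.inr (Sum.inr ()))).im) * hn]
      · linear_combination (-(S (Sum.inr (Sum.inl k)) (Sum.inr (Sum.inl l)))) * haa
      · have e : ∑ x : Fin m, (starRingEnd ℂ) (S (Sum.inl ()) (Sum.inl ()))
            * S (Sum.inr (Sum.inl k)) (Sum.inr (Sum.inl x))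
            * (∑ j, (starRingEnd ℂ) (S (Sum.inr (Sum.inl j)) (Sum.inr (Sum.inl x)))
                * S (Sum.inr (Sum.inl j)) (Sum.inr (Sum.inr ())))
            = (starRingEnd ℂ) (S (Sum.inl ()) (Sum.inl ()))
                * S (Sum.inr (Sum.inl k)) (Sum.inr (Sum.inr ())) := by
          rw [← hw k, Finset.mul_sum]
          exact Finset.sum_congr rfl fun l _ => by ring
        rw [e]
        linear_combination (-(S (Sum.inr (Sum.inl k)) (Sum.inr (Sum.inr ())))) * haa
  · rintro ⟨μ, V, σ, s, hμ, hV, hVτ, hIm, rfl⟩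
    simp only [dotc] at hIm
    rw [RU_mul_Htr_s16, Matrix.smul_mul, Matrix.mul_smul]
    congr 1
    have hV1 : star V * V = 1 := Matrix.mem_unitaryGroup_iff'.mp hV
    have hVτ' : ∀ k, ∑ j, V k j * τ j = τ k := fun k => by
      have := congrFun hVτ k; simpa [Matrix.mulVec, dotProduct] using this
    have hVsτ : star V *ᵥ τ = τ := by
      conv_lhs => rw [← hVτ, Matrix.mulVec_mulVec, hV1]
      rw [Matrix.one_mulVec]
    have hVsτ' : ∀ l, ∑ j, (starRingEnd ℂ) (V j l) * τ j = τ l := fun l => by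
      have := congrFun hVsτ l
      simpa [Matrix.mulVec, dotProduct, Matrix.star_apply] using this
    have hτV : ∀ l, ∑ j, (starRingEnd ℂ) (τ j) * V j l = (starRingEnd ℂ) (τ l) := fun l => by
      have := congrArg (starRingEnd ℂ) (hVsτ' l)
      simpa [map_sum, _root_.map_mul, mul_comm] using this
    have hD : ∑ j, (starRingEnd ℂ) (σ j) * τ j = ∑ j, (starRingEnd ℂ) (τ j) * σ j := by
      have h0 : (starRingEnd ℂ) (∑ k, (starRingEnd ℂ) (τ k) * σ k)
          = ∑ k, (starRingEnd ℂ) (τ k) * σ k := Complex.conj_eq_iff_im.mpr hIm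
      simpa [map_sum, _root_.map_mul, mul_comm] using h0
    have hTVσ : ∑ x : Fin m, ∑ y : Fin m, (starRingEnd ℂ) (τ x) * (V x y * σ y)
        = ∑ j, (starRingEnd ℂ) (τ j) * σ j := by
      rw [Finset.sum_comm]
      refine Finset.sum_congr rfl fun y _ => ?_
      have h1 : ∑ x : Fin m, (starRingEnd ℂ) (τ x) * (V x y * σ y)
          = (∑ x : Fin m, (starRingEnd ℂ) (τ x) * V x y) * σ y := by
        rw [Finset.sum_mul]
        exact Finset.sum_congr rfl fun x _ => by ring
      rw [h1, hτV y]
    ext i j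
    rcases i with ⟨⟩ | k | ⟨⟩ <;> rcases j with ⟨⟩ | l | ⟨⟩ <;>
      simp [mulIdx, RT, Htr, Matrix.mulVec, dotProduct, Finset.mul_sum]
    · linear_combination hτV l
    · linear_combination hTVσ - hD
    · linear_combination hVτ' k
end

section
/- Let n ≥ 3. Let U, U′ ∈ U(n−1) be unitary, τ ∈ ℂ^{n−1} with τ ≠ 0 and Uτ = τ, and t, t′ ∈ ℝ. Then the screw parabolic R_U T_{(τ,t)} is not conjugate in U(n,1) to R_{U′} T_{(0,t′)}: there is no g ∈ U(n,1) with g · (R_U T_{(τ,t)}) · g⁻¹ = R_{U′} T_{(0,t′)}. -/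
open Matrix Complex

namespace ScrewAux

open Matrix Complex

/-- Explicit form of `RU U * Htr τ t` when `U *ᵥ τ = τ`. -/
lemma M_eq {m : ℕ} (U : Matrix (Fin m) (Fin m) ℂ) (τ : Fin m → ℂ) (t : ℝ)
    (hUτ : U *ᵥ τ = τ) :
    RU U * Htr τ t = Matrix.of (fun i j =>
      match i, j with
      | Sum.inl _, Sum.inl _ => (1 : ℂ)
      | Sum.inl _, Sum.inr (Sum.inl l) => -((starRingEnd ℂ) (τ l))
      | Sum.inl _, Sum.inr (Sum.inr _) =>
          (-(((∑ k, Complex.normSq (τ k) : ℝ)) : ℂ) + (t : ℂ) * Complex.I) / 2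
      | Sum.inr (Sum.inl k), Sum.inr (Sum.inl l) => U k l
      | Sum.inr (Sum.inl k), Sum.inr (Sum.inr _) => τ k
      | Sum.inr (Sum.inr _), Sum.inr (Sum.inr _) => 1
      | _, _ => 0) := by
  ext i j
  cases i with
  | inl u =>
      cases u
      cases j with
      | inl u' => cases u'; simp [RU, Htr, Matrix.mul_apply, Fintype.sum_sum_type]
      | inr j' =>
          cases j' with
          | inl l => simp [RU, Htr, Matrix.mul_apply, Fintype.sum_sum_type, mul_ite,
              Finset.sum_ite_eq']
          | inr u' => cases u'; simp [RU, Htr, Matrix.mul_apply, Fintype.sum_sum_type]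
  | inr i' =>
      cases i' with
      | inl k =>
          cases j with
          | inl u' => cases u'; simp [RU, Htr, Matrix.mul_apply, Fintype.sum_sum_type]
          | inr j' =>
              cases j' with
              | inl l => simp [RU, Htr, Matrix.mul_apply, Fintype.sum_sum_type, mul_ite,
                  Finset.sum_ite_eq']
              | inr u' =>
                  cases u'
                  have hk := congrFun hUτ k
                  simp only [Matrix.mulVec, dotProduct] at hk
                  simp [RU, Htr, Matrix.mul_apply, Fintype.sum_sum_type, hk]
      | inr u =>
          cases u
          cases j with
          | inl u' => cases u'; simp [RU, Htr, Matrix.mul_apply, Fintype.sum_sum_type]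
          | inr j' =>
              cases j' with
              | inl l => simp [RU, Htr, Matrix.mul_apply, Fintype.sum_sum_type]
              | inr u' => cases u'; simp [RU, Htr, Matrix.mul_apply, Fintype.sum_sum_type]

/-- A complex vector with `star v ⬝ᵥ v = 0` is zero. -/
lemma star_dot_self_zero {m : ℕ} (v : Fin m → ℂ) (h : star v ⬝ᵥ v = 0) : v = 0 := by
  have h2 : ((∑ k, Complex.normSq (v k) : ℝ) : ℂ) = 0 := by
    push_cast
    simpa [dotProduct, Complex.normSq_eq_conj_mul_self] using h
  have h3 : ∑ k, Complex.normSq (v k) = 0 := by exact_mod_cast h2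
  funext k
  have h4 := (Finset.sum_eq_zero_iff_of_nonneg
    (fun i _ => Complex.normSq_nonneg (v i))).mp h3 k (Finset.mem_univ k)
  simpa using Complex.normSq_eq_zero.mp h4

/-- For a normal matrix `B`, `B² z = 0` implies `B z = 0`. -/
lemma normal_ker_sq {m : ℕ} (B : Matrix (Fin m) (Fin m) ℂ) (hB : Bᴴ * B = B * Bᴴ)
    (y : Fin m → ℂ) (h : B *ᵥ (B *ᵥ y) = 0) : B *ᵥ y = 0 := by
  set z := B *ᵥ y with hz
  have hBz : B *ᵥ z = 0 := h
  have hstar : star (Bᴴ *ᵥ z) = star z ᵥ* B := by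
    rw [star_mulVec, conjTranspose_conjTranspose]
  have key : star (Bᴴ *ᵥ z) ⬝ᵥ (Bᴴ *ᵥ z) = 0 := by
    rw [hstar, ← dotProduct_mulVec, mulVec_mulVec, ← hB, ← mulVec_mulVec, hBz,
      mulVec_zero, dotProduct_zero]
  have hBHz : Bᴴ *ᵥ z = 0 := star_dot_self_zero _ key
  have hzz : star z ⬝ᵥ z = 0 := by
    calc star z ⬝ᵥ z = star z ⬝ᵥ (B *ᵥ y) := by rw [← hz]
      _ = (star z ᵥ* B) ⬝ᵥ y := dotProduct_mulVec _ _ _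
      _ = star (Bᴴ *ᵥ z) ⬝ᵥ y := by rw [hstar]
      _ = 0 := by rw [hBHz, star_zero, zero_dotProduct]
  exact star_dot_self_zero _ hzz

end ScrewAux

theorem screw_parabolic_types_not_conjugate {m : ℕ} (hm : 2 ≤ m)
    (U U' : Matrix (Fin m) (Fin m) ℂ)
    (hU : U ∈ Matrix.unitaryGroup (Fin m) ℂ) (hU' : U' ∈ Matrix.unitaryGroup (Fin m) ℂ)
    (τ : Fin m → ℂ) (hτ0 : τ ≠ 0) (hUτ : U.mulVec τ = τ) (t t' : ℝ) :
    ¬ ∃ g : Matrix (Idx m) (Idx m) ℂ, InU2 g ∧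
        g * (RU U * Htr τ t) * g⁻¹ = RU U' * Htr (0 : Fin m → ℂ) t'   := by
  rintro ⟨g, ⟨hgU, -⟩, hcon⟩
  classical
  set s : ℝ := ∑ k, Complex.normSq (τ k) with hs
  set c : ℂ := (-(s : ℂ) + (t : ℂ) * Complex.I) / 2 with hc
  -- positivity of s
  have hτk : ∃ k, τ k ≠ 0 := by
    by_contra hcontra
    push_neg at hcontra
    exact hτ0 (funext fun k => hcontra k)
  obtain ⟨k0, hk0⟩ := hτk
  have hspos : 0 < s := by
    rw [hs]
    exact Finset.sum_pos' (fun i _ => Complex.normSq_nonneg _)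
      ⟨k0, Finset.mem_univ _, Complex.normSq_pos.mpr hk0⟩
  have hsne : (s : ℂ) ≠ 0 := Complex.ofReal_ne_zero.mpr (ne_of_gt hspos)
  -- explicit forms of the two matrices
  have hMe := ScrewAux.M_eq U τ t hUτ
  have hM'e := ScrewAux.M_eq U' (0 : Fin m → ℂ) t' (by simp)
  set M : Matrix (Idx m) (Idx m) ℂ := RU U * Htr τ t with hM
  set M' : Matrix (Idx m) (Idx m) ℂ := RU U' * Htr (0 : Fin m → ℂ) t' with hM'
  set A : Matrix (Idx m) (Idx m) ℂ := M - 1 with hA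
  set A' : Matrix (Idx m) (Idx m) ℂ := M' - 1 with hA'
  set B : Matrix (Fin m) (Fin m) ℂ := U' - 1 with hB
  -- invertibility of g
  have hdet : IsUnit g.det := (Matrix.isUnit_iff_isUnit_det g).mp hgU
  have hginv : g⁻¹ * g = 1 := Matrix.nonsing_inv_mul g hdet
  have hgM : g * M = M' * g := by
    rw [← hcon, Matrix.mul_assoc (g * M) g⁻¹ g, hginv, Matrix.mul_one]
  have hgA : A' * g = g * A := by
    rw [hA, hA', Matrix.sub_mul, Matrix.mul_sub, Matrix.one_mul, Matrix.mul_one, hgM]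
  have hcomm : ∀ x : Idx m → ℂ, A' *ᵥ (g *ᵥ x) = g *ᵥ (A *ᵥ x) := by
    intro x
    rw [Matrix.mulVec_mulVec, Matrix.mulVec_mulVec, hgA]
  -- normality of B = U' - 1
  have hU'1 : U'ᴴ * U' = 1 := hU'.1
  have hU'2 : U' * U'ᴴ = 1 := hU'.2
  have hBnormal : Bᴴ * B = B * Bᴴ := by
    simp only [hB, conjTranspose_sub, conjTranspose_one, Matrix.sub_mul, Matrix.mul_sub,
      Matrix.one_mul, Matrix.mul_one, hU'1, hU'2]
    abel
  -- the key sum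
  have hconjsum : (∑ l, (starRingEnd ℂ) (τ l) * τ l) = (s : ℂ) := by
    rw [Finset.sum_congr rfl fun l _ => Complex.normSq_eq_conj_mul_self.symm, hs]
    push_cast
    ring
  -- vector computations for A = M - 1
  set x1 : Idx m → ℂ := Sum.elim (fun _ => c) (Sum.elim τ fun _ => 0) with hx1
  have hAv : A *ᵥ elast m = x1 := by
    rw [hA, Matrix.sub_mulVec, Matrix.one_mulVec, hMe]
    funext i
    cases i with
    | inl u =>
        cases u
        simp [Matrix.mulVec, dotProduct, Fintype.sum_sum_type, elast, hx1, hc]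
        rw [hs]
        push_cast
        ring
    | inr i' =>
        cases i' with
        | inl k =>
            simp [Matrix.mulVec, dotProduct, Fintype.sum_sum_type, elast, hx1]
        | inr u =>
            cases u
            simp [Matrix.mulVec, dotProduct, Fintype.sum_sum_type, elast, hx1]
  have hAx1 : A *ᵥ x1 = (-(s : ℂ)) • e1 m := by
    rw [hA, Matrix.sub_mulVec, Matrix.one_mulVec, hMe]
    funext i
    cases i with
    | inl u =>
        cases u
        simp [Matrix.mulVec, dotProduct, Fintype.sum_sum_type, e1, hx1, hconjsum]
    | inr i' =>
        cases i' with
        | inl k =>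
            have hk := congrFun hUτ k
            simp only [Matrix.mulVec, dotProduct] at hk
            simp [Matrix.mulVec, dotProduct, Fintype.sum_sum_type, e1, hx1, hk]
        | inr u =>
            cases u
            simp [Matrix.mulVec, dotProduct, Fintype.sum_sum_type, e1, hx1]
  have hAe1 : A *ᵥ e1 m = 0 := by
    rw [hA, Matrix.sub_mulVec, Matrix.one_mulVec, hMe]
    funext i
    cases i with
    | inl u =>
        cases u
        simp [Matrix.mulVec, dotProduct, Fintype.sum_sum_type, e1]
    | inr i' =>
        cases i' with
        | inl k =>
            simp [Matrix.mulVec, dotProduct, Fintype.sum_sum_type, e1]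
        | inr u =>
            cases u
            simp [Matrix.mulVec, dotProduct, Fintype.sum_sum_type, e1]
  -- structure of A' = M' - 1
  have hA'w : ∀ w : Idx m → ℂ, A' *ᵥ w = Sum.elim
      (fun _ => (t' : ℂ) * Complex.I / 2 * w (Sum.inr (Sum.inr ())))
      (Sum.elim (B *ᵥ fun k => w (Sum.inr (Sum.inl k))) (fun _ => 0)) := by
    intro w
    rw [hA', Matrix.sub_mulVec, Matrix.one_mulVec, hM'e]
    funext i
    cases i with
    | inl u =>
        cases u
        simp [Matrix.mulVec, dotProduct, Fintype.sum_sum_type]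
    | inr i' =>
        cases i' with
        | inl k =>
            simp [hB, Matrix.sub_mulVec, Matrix.one_mulVec, Matrix.mulVec,
              dotProduct, Fintype.sum_sum_type]
        | inr u =>
            cases u
            simp [Matrix.mulVec, dotProduct, Fintype.sum_sum_type]
  -- the chain of vectors
  set w : Idx m → ℂ := g *ᵥ elast m with hw
  have hw1 : A' *ᵥ w = g *ᵥ x1 := by rw [hw, hcomm, hAv]
  have hw2 : A' *ᵥ (A' *ᵥ w) = (-(s : ℂ)) • (g *ᵥ e1 m) := by
    rw [hw1, hcomm, hAx1, Matrix.mulVec_smul]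
  have hw3 : A' *ᵥ (A' *ᵥ (A' *ᵥ w)) = 0 := by
    rw [hw2, Matrix.mulVec_smul, hcomm, hAe1, Matrix.mulVec_zero, smul_zero]
  -- extract middle components
  set y : Fin m → ℂ := fun k => w (Sum.inr (Sum.inl k)) with hy
  have hmid1 : (fun k => (A' *ᵥ w) (Sum.inr (Sum.inl k))) = B *ᵥ y := by
    funext k
    rw [hA'w w]
    rfl
  have hmid2 : (fun k => (A' *ᵥ (A' *ᵥ w)) (Sum.inr (Sum.inl k))) = B *ᵥ (B *ᵥ y) := by
    funext k
    rw [hA'w (A' *ᵥ w)]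
    simp only [Sum.elim_inr, Sum.elim_inl]
    rw [hmid1]
  have hmid3 : B *ᵥ (B *ᵥ (B *ᵥ y)) = 0 := by
    funext k
    have h3k := congrFun hw3 (Sum.inr (Sum.inl k))
    rw [hA'w (A' *ᵥ (A' *ᵥ w))] at h3k
    simp only [Sum.elim_inr, Sum.elim_inl] at h3k
    rw [hmid2] at h3k
    exact h3k
  have hmid2' : B *ᵥ (B *ᵥ y) = 0 := ScrewAux.normal_ker_sq B hBnormal (B *ᵥ y) hmid3
  -- conclude A'² w = 0
  have htop1 : (A' *ᵥ w) (Sum.inr (Sum.inr ())) = 0 := by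
    rw [hA'w w]; rfl
  have hw2' : A' *ᵥ (A' *ᵥ w) = 0 := by
    rw [hA'w (A' *ᵥ w)]
    funext i
    cases i with
    | inl u =>
        cases u
        simp [htop1]
    | inr i' =>
        cases i' with
        | inl k =>
            simp only [Sum.elim_inr, Sum.elim_inl, Pi.zero_apply]
            rw [hmid1]
            exact congrFun hmid2' k
        | inr u => cases u; rfl
  -- contradiction
  have hge1 : g *ᵥ e1 m = 0 := by
    have := hw2.symm.trans hw2'
    rcases smul_eq_zero.mp this with h | h
    · exact absurd h (neg_ne_zero.mpr hsne)
    · exact h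
  have he1 : e1 m = 0 := by
    have : (g⁻¹ * g) *ᵥ e1 m = 0 := by
      rw [← Matrix.mulVec_mulVec, hge1, Matrix.mulVec_zero]
    rwa [hginv, Matrix.one_mulVec] at this
  have : (1 : ℂ) = 0 := by
    have h5 := congrFun he1 (Sum.inl ())
    simp [e1] at h5
  exact one_ne_zero this
end
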